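/- arXiv:2504.01829 — 6 statements merged into one kernel-verified Lean document; each statement's English description precedes it below -/
import Mathlib

section
/- Let Ω be finite, A a finite menu, and suppose sender preferences u: A × Ω → ℝ and receiver preferences v: A × Ω → ℝ are given, with tie-breaking in the sender's favor. Then there exists an optimal Bayesian persuasion signal (a Bayes-plausible distribution over action–posterior recommendation pairs satisfying receiver obedience) whose support is contained in the set {(a,p) : a ∈ A, p an extreme point of C_{A,a}}. -/
open Finset


/-- The extreme points of a finite intersection of halfspaces form a finite set. -/
lemma extremePoints_halfspaces_finite {V : Type} [Fintype V] {ι : Type} [Fintype ι]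
    (f : ι → (V → ℝ) →ₗ[ℝ] ℝ) (c : ι → ℝ) :
    (Set.extremePoints ℝ {q : V → ℝ | ∀ i, f i q ≤ c i}).Finite := by
  classical
  set S : Set (V → ℝ) := {q : V → ℝ | ∀ i, f i q ≤ c i} with hS
  have : Set.InjOn (fun x => Finset.univ.filter (fun i => f i x = c i))
      (Set.extremePoints ℝ S) := by
    intro x hx y hy hxy
    by_contra hne
    set d : V → ℝ := x - y with hd
    have hdact : ∀ i, f i x = c i → f i d = 0 := by
      intro i hi
      have hiy : f i y = c i := by
        have hxy' : Finset.univ.filter (fun j => f j x = c j)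
            = Finset.univ.filter (fun j => f j y = c j) := hxy
        have h1 : i ∈ Finset.univ.filter (fun j => f j x = c j) := by simp [hi]
        rw [hxy'] at h1
        simpa using h1
      simp [hd, map_sub, hi, hiy]
    set I : Finset ι := Finset.univ.filter (fun i => f i x ≠ c i) with hI
    set G : ι → ℝ := fun i => (c i - f i x) / (|f i d| + 1) with hG
    set t : ℝ := (insert (1:ℝ) (I.image G)).min' (insert_nonempty _ _) with ht
    have hstrict : ∀ i ∈ I, f i x < c i := by
      intro i hi
      rw [hI, mem_filter] at hi
      exact lt_of_le_of_ne (hx.1 i) hi.2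
    have ht0 : 0 < t := by
      rw [ht]
      apply (Finset.lt_min'_iff _ _).2
      intro z hz
      rcases Finset.mem_insert.1 hz with h | h
      · simp [h]
      · obtain ⟨i, hi, rfl⟩ := Finset.mem_image.1 h
        exact div_pos (sub_pos.2 (hstrict i hi)) (by positivity)
    have htle : ∀ i ∈ I, t ≤ G i := by
      intro i hi
      exact Finset.min'_le _ _ (Finset.mem_insert_of_mem (Finset.mem_image_of_mem _ hi))
    have key : ∀ i, f i x + t * |f i d| ≤ c i := by
      intro i
      by_cases hi : f i x = c i
      · rw [hdact i hi, abs_zero, mul_zero, add_zero, hi]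
      · have hiI : i ∈ I := by rw [hI]; simp [hi]
        have h1 : t * (|f i d| + 1) ≤ c i - f i x := by
          rw [← le_div_iff₀ (by positivity)]
          exact htle i hiI
        nlinarith [abs_nonneg (f i d), ht0]
    have hz : x + t • d ∈ S := by
      intro i
      have : f i (x + t • d) = f i x + t * f i d := by
        simp [map_add, map_smul, smul_eq_mul]
      rw [this]
      have := key i
      have habs := le_abs_self (f i d)
      nlinarith [ht0]
    have hw : x - t • d ∈ S := by
      intro i
      have : f i (x - t • d) = f i x - t * f i d := by
        simp [map_sub, map_smul, smul_eq_mul]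
      rw [this]
      have := key i
      have habs := neg_abs_le (f i d)
      nlinarith [ht0]
    have hseg : x ∈ openSegment ℝ (x + t • d) (x - t • d) := by
      refine ⟨1/2, 1/2, by norm_num, by norm_num, by norm_num, ?_⟩
      module
    have := hx.2 hz hw hseg
    have hd0 : d = 0 := by
      have htd : t • d = 0 := by
        have : x + t • d = x := this
        linear_combination (norm := abel) this
      rcases smul_eq_zero.1 htd with h | h
      · exact absurd h (ne_of_gt ht0)
      · exact h
    exact hne (by rw [hd, sub_eq_zero] at hd0; exact hd0)
  exact Set.Finite.of_finite_image (Set.toFinite _) this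


noncomputable def sumLin {V : Type} [Fintype V] (g : V → ℝ) : (V → ℝ) →ₗ[ℝ] ℝ where
  toFun q := ∑ ω, g ω * q ω
  map_add' x y := by
    simp only [Pi.add_apply, mul_add]
    rw [Finset.sum_add_distrib]
  map_smul' r x := by
    simp only [Pi.smul_apply, smul_eq_mul, RingHom.id_apply, Finset.mul_sum]
    exact Finset.sum_congr rfl fun ω _ => by ring

lemma sumLin_apply {V : Type} [Fintype V] (g : V → ℝ) (q : V → ℝ) :
    sumLin g q = ∑ ω, g ω * q ω := rfl

section Region

variable {Ω A : Type} [Fintype Ω] [Fintype A]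

/-- The region where `a` is optimal, as an intersection of halfspaces. -/
lemma region_halfspaces (v : A → Ω → ℝ) (a : A) :
    {q : Ω → ℝ | q ∈ stdSimplex ℝ Ω ∧ ∀ b : A, ∑ ω, v b ω * q ω ≤ ∑ ω, v a ω * q ω}
      = {q : Ω → ℝ | ∀ i : (Ω ⊕ Bool) ⊕ A,
          Sum.elim (Sum.elim (fun ω => -(LinearMap.proj ω : (Ω → ℝ) →ₗ[ℝ] ℝ))
            (fun b : Bool => if b then sumLin (fun _ => (1:ℝ)) else -sumLin (fun _ => (1:ℝ))))
            (fun b => sumLin (fun ω => v b ω - v a ω)) i q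
          ≤ Sum.elim (Sum.elim (fun _ => (0:ℝ)) (fun b : Bool => if b then 1 else -1))
            (fun _ => (0:ℝ)) i} := by
  ext q
  simp only [Set.mem_setOf_eq, stdSimplex, Set.mem_setOf_eq]
  constructor
  · rintro ⟨⟨hpos, hsum⟩, hopt⟩ i
    rcases i with (ω | b) | b
    · simpa using hpos ω
    · rcases b with _ | _ <;> simp [sumLin_apply, hsum]
    · have := hopt b
      simp only [Sum.elim_inr, sumLin_apply, sub_mul]
      rw [Finset.sum_sub_distrib]
      linarith
  · intro h
    refine ⟨⟨fun ω => by simpa using h (Sum.inl (Sum.inl ω)), ?_⟩, fun b => ?_⟩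
    · have h1 := h (Sum.inl (Sum.inr true))
      have h2 := h (Sum.inl (Sum.inr false))
      simp only [Sum.elim_inl, Sum.elim_inr, if_true, if_false, LinearMap.neg_apply] at h1 h2
      rw [sumLin_apply] at h1
      rw [show ((if false = true then sumLin (fun _ => (1:ℝ)) else -sumLin (fun _ => (1:ℝ)))) =
        -sumLin (fun _ => (1:ℝ)) from rfl, LinearMap.neg_apply, sumLin_apply] at h2
      simp only [one_mul] at h1 h2
      norm_num at h2
      exact le_antisymm h1 h2
    · have := h (Sum.inr b)
      simp only [Sum.elim_inr, sumLin_apply, sub_mul] at this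
      rw [Finset.sum_sub_distrib] at this
      linarith

end Region

section Region2

variable {Ω A : Type} [Fintype Ω] [Fintype A]

lemma region_props (v : A → Ω → ℝ) (a : A) :
    letI S : Set (Ω → ℝ) :=
      {q : Ω → ℝ | q ∈ stdSimplex ℝ Ω ∧ ∀ b : A, ∑ ω, v b ω * q ω ≤ ∑ ω, v a ω * q ω}
    (Set.extremePoints ℝ S).Finite ∧ S = convexHull ℝ (Set.extremePoints ℝ S) := by
  set S : Set (Ω → ℝ) :=
    {q : Ω → ℝ | q ∈ stdSimplex ℝ Ω ∧ ∀ b : A, ∑ ω, v b ω * q ω ≤ ∑ ω, v a ω * q ω} with hSdef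
  have hrep := region_halfspaces v a
  set F := Sum.elim (Sum.elim (fun ω => -(LinearMap.proj ω : (Ω → ℝ) →ₗ[ℝ] ℝ))
            (fun b : Bool => if b then sumLin (fun _ => (1:ℝ)) else -sumLin (fun _ => (1:ℝ))))
            (fun b => sumLin (fun ω => v b ω - v a ω)) with hF
  set c := Sum.elim (Sum.elim (fun _ : Ω => (0:ℝ)) (fun b : Bool => if b then 1 else -1))
            (fun _ : A => (0:ℝ)) with hc
  have hrep' : S = ⋂ i, {q : Ω → ℝ | F i q ≤ c i} := by
    rw [show S = {q : Ω → ℝ | ∀ i, F i q ≤ c i} from hrep]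
    ext q; simp
  have hconv : Convex ℝ S := by
    rw [hrep']
    exact convex_iInter fun i => convex_halfSpace_le (F i).isLinear _
  have hclosed : IsClosed S := by
    rw [hrep']
    exact isClosed_iInter fun i =>
      isClosed_le (F i).continuous_of_finiteDimensional continuous_const
  have hsub : S ⊆ stdSimplex ℝ Ω := fun q hq => hq.1
  have hcomp : IsCompact S := (isCompact_stdSimplex ℝ Ω).of_isClosed_subset hclosed hsub
  have hfin : (Set.extremePoints ℝ S).Finite := by
    rw [show S = {q : Ω → ℝ | ∀ i, F i q ≤ c i} from hrep]
    exact extremePoints_halfspaces_finite F c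
  refine ⟨hfin, ?_⟩
  have hKM := closure_convexHull_extremePoints hcomp hconv
  rw [(hfin.isClosed_convexHull (𝕜 := ℝ)).closure_eq] at hKM
  exact hKM.symm

end Region2


lemma exists_weights {V : Type} [Fintype V] {S : Set (V → ℝ)}
    (hfin : (Set.extremePoints ℝ S).Finite)
    (hhull : S = convexHull ℝ (Set.extremePoints ℝ S)) {p : V → ℝ} (hp : p ∈ S) :
    ∃ w : (V → ℝ) → ℝ, (∀ e, 0 ≤ w e) ∧ (∑ e ∈ hfin.toFinset, w e = 1) ∧
      ∀ ω, ∑ e ∈ hfin.toFinset, w e * e ω = p ω := by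
  classical
  have hmem : p ∈ convexHull ℝ (↑hfin.toFinset : Set (V → ℝ)) := by
    rw [Set.Finite.coe_toFinset]; rw [hhull] at hp; exact hp
  rw [Finset.convexHull_eq] at hmem
  obtain ⟨w, hw0, hw1, hwc⟩ := hmem
  refine ⟨fun e => if e ∈ hfin.toFinset then w e else 0, fun e => ?_, ?_, fun ω => ?_⟩
  · show 0 ≤ if e ∈ hfin.toFinset then w e else 0
    split
    · exact hw0 _ ‹_›
    · exact le_rfl
  · rw [← hw1]
    exact Finset.sum_congr rfl fun e he => if_pos he
  · rw [Finset.centerMass_eq_of_sum_1 _ _ hw1] at hwc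
    have h2 := congrFun hwc ω
    rw [← h2, Finset.sum_apply]
    refine Finset.sum_congr rfl fun e he => ?_
    show (if e ∈ hfin.toFinset then w e else 0) * e ω = (w e • id e) ω
    rw [if_pos he]
    simp [smul_eq_mul]

lemma signal_decompose {Ω A : Type} [Fintype Ω] [Fintype A]
    (C : A → Set (Ω → ℝ))
    (Ex : A → Finset (Ω → ℝ)) (hExt : ∀ a, (↑(Ex a) : Set (Ω → ℝ)) = Set.extremePoints ℝ (C a))
    (W : A → (Ω → ℝ) → (Ω → ℝ) → ℝ)
    (hW0 : ∀ a p e, 0 ≤ W a p e)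
    (hW1 : ∀ a p, p ∈ C a → ∑ e ∈ Ex a, W a p e = 1)
    (hWp : ∀ a p, p ∈ C a → ∀ ω, ∑ e ∈ Ex a, W a p e * e ω = p ω)
    (u : A → Ω → ℝ)
    (π : (A × (Ω → ℝ)) →₀ ℝ) (hpos : ∀ x, 0 ≤ π x)
    (hobe : ∀ x ∈ π.support, x.2 ∈ C x.1) :
    ∃ π' : (A × (Ω → ℝ)) →₀ ℝ, (∀ x, 0 ≤ π' x) ∧
      (∀ y ∈ π'.support, y.2 ∈ Set.extremePoints ℝ (C y.1)) ∧
      (∑ y ∈ π'.support, π' y = ∑ x ∈ π.support, π x) ∧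
      (∀ ω, ∑ y ∈ π'.support, π' y * y.2 ω = ∑ x ∈ π.support, π x * x.2 ω) ∧
      (∑ y ∈ π'.support, π' y * ∑ ω, u y.1 ω * y.2 ω
        = ∑ x ∈ π.support, π x * ∑ ω, u x.1 ω * x.2 ω) := by
  classical
  set π' : (A × (Ω → ℝ)) →₀ ℝ :=
    ∑ x ∈ π.support, ∑ e ∈ Ex x.1, Finsupp.single (x.1, e) (π x * W x.1 x.2 e) with hπ'
  have happ : ∀ y, π' y = ∑ x ∈ π.support, ∑ e ∈ Ex x.1,
      (Finsupp.single (x.1, e) (π x * W x.1 x.2 e) : (A × (Ω → ℝ)) →₀ ℝ) y := by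
    intro y
    rw [hπ']
    rw [Finset.sum_apply']
    exact Finset.sum_congr rfl fun x _ => Finset.sum_apply' _
  have hnn : ∀ y, 0 ≤ π' y := by
    intro y
    rw [happ y]
    refine Finset.sum_nonneg fun x hx => Finset.sum_nonneg fun e he => ?_
    rw [Finsupp.single_apply]
    split
    · exact mul_nonneg (hpos x) (hW0 _ _ _)
    · exact le_rfl
  have hsupp : ∀ y ∈ π'.support, y.2 ∈ Set.extremePoints ℝ (C y.1) := by
    intro y hy
    by_contra hyn
    have : π' y = 0 := by
      rw [happ y]
      refine Finset.sum_eq_zero fun x hx => Finset.sum_eq_zero fun e he => ?_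
      rw [Finsupp.single_apply, if_neg]
      intro hcon
      apply hyn
      have h1 : y.1 = x.1 := by rw [← hcon]
      have h2 : y.2 = e := by rw [← hcon]
      rw [h1, ← hExt x.1]
      rw [h2]
      exact he
    exact (Finsupp.mem_support_iff.1 hy) this
  have hgen : ∀ g : A × (Ω → ℝ) → ℝ,
      ∑ y ∈ π'.support, π' y * g y
        = ∑ x ∈ π.support, ∑ e ∈ Ex x.1, (π x * W x.1 x.2 e) * g (x.1, e) := by
    intro g
    have h0 : ∀ y : A × (Ω → ℝ), (0:ℝ) * g y = 0 := fun y => zero_mul _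
    have hadd : ∀ (y : A × (Ω → ℝ)) (b₁ b₂ : ℝ), (b₁ + b₂) * g y = b₁ * g y + b₂ * g y :=
      fun y b₁ b₂ => add_mul _ _ _
    have hLHS : ∑ y ∈ π'.support, π' y * g y = π'.sum (fun y c => c * g y) := rfl
    rw [hLHS, hπ', ← Finsupp.sum_finset_sum_index h0 hadd]
    refine Finset.sum_congr rfl fun x hx => ?_
    rw [← Finsupp.sum_finset_sum_index h0 hadd]
    refine Finset.sum_congr rfl fun e he => ?_
    exact Finsupp.sum_single_index (h0 _)
  refine ⟨π', hnn, hsupp, ?_, ?_, ?_⟩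
  · have := hgen (fun _ => 1)
    simp only [mul_one] at this
    rw [this]
    refine Finset.sum_congr rfl fun x hx => ?_
    rw [← Finset.mul_sum, hW1 x.1 x.2 (hobe x hx), mul_one]
  · intro ω
    have := hgen (fun y => y.2 ω)
    rw [this]
    refine Finset.sum_congr rfl fun x hx => ?_
    have h1 := hWp x.1 x.2 (hobe x hx) ω
    calc ∑ e ∈ Ex x.1, π x * W x.1 x.2 e * e ω
        = π x * ∑ e ∈ Ex x.1, W x.1 x.2 e * e ω := by
          rw [Finset.mul_sum]; exact Finset.sum_congr rfl fun e _ => by ring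
      _ = π x * x.2 ω := by rw [h1]
  · have := hgen (fun y => ∑ ω, u y.1 ω * y.2 ω)
    rw [this]
    refine Finset.sum_congr rfl fun x hx => ?_
    have h1 := hWp x.1 x.2 (hobe x hx)
    calc ∑ e ∈ Ex x.1, π x * W x.1 x.2 e * ∑ ω, u x.1 ω * e ω
        = π x * ∑ e ∈ Ex x.1, W x.1 x.2 e * ∑ ω, u x.1 ω * e ω := by
          rw [Finset.mul_sum]; exact Finset.sum_congr rfl fun e _ => by ring
      _ = π x * ∑ ω, u x.1 ω * x.2 ω := by
          congr 1
          calc ∑ e ∈ Ex x.1, W x.1 x.2 e * ∑ ω, u x.1 ω * e ω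
              = ∑ e ∈ Ex x.1, ∑ ω, u x.1 ω * (W x.1 x.2 e * e ω) := by
                refine Finset.sum_congr rfl fun e _ => ?_
                rw [Finset.mul_sum]
                exact Finset.sum_congr rfl fun ω _ => by ring
            _ = ∑ ω, ∑ e ∈ Ex x.1, u x.1 ω * (W x.1 x.2 e * e ω) := Finset.sum_comm
            _ = ∑ ω, u x.1 ω * x.2 ω := by
                refine Finset.sum_congr rfl fun ω _ => ?_
                rw [← Finset.mul_sum, h1 ω]


/-- There exists an optimal Bayesian persuasion signal supported on pairs
`(a, p)` with `p` an extreme point of the region `C_{A,a}` where `a` is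
receiver-optimal. -/
theorem stmt_3 {Ω A : Type} [Fintype Ω] [Fintype A] [Nonempty A]
    (p0 : Ω → ℝ) (hp0 : p0 ∈ stdSimplex ℝ Ω)
    (u v : A → Ω → ℝ)
    (C : A → Set (Ω → ℝ))
    (hC : ∀ a, C a = {q : Ω → ℝ | q ∈ stdSimplex ℝ Ω ∧
        ∀ b : A, ∑ ω, v b ω * q ω ≤ ∑ ω, v a ω * q ω})
    (IsSignal : ((A × (Ω → ℝ)) →₀ ℝ) → Prop)
    (hSig : ∀ π : (A × (Ω → ℝ)) →₀ ℝ, IsSignal π ↔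
      ((∀ x, 0 ≤ π x) ∧ (∑ x ∈ π.support, π x = 1) ∧
       (∀ ω, ∑ x ∈ π.support, π x * x.2 ω = p0 ω) ∧
       (∀ x ∈ π.support, x.2 ∈ C x.1)))
    (val : ((A × (Ω → ℝ)) →₀ ℝ) → ℝ)
    (hval : ∀ π : (A × (Ω → ℝ)) →₀ ℝ,
      val π = ∑ x ∈ π.support, π x * ∑ ω, u x.1 ω * x.2 ω) :
    ∃ π : (A × (Ω → ℝ)) →₀ ℝ, IsSignal π ∧
      (∀ π', IsSignal π' → val π' ≤ val π) ∧
      ∀ x ∈ π.support, x.2 ∈ Set.extremePoints ℝ (C x.1) := by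
  classical
  have hprop : ∀ a, (Set.extremePoints ℝ (C a)).Finite ∧
      C a = convexHull ℝ (Set.extremePoints ℝ (C a)) := by
    intro a
    rw [hC a]
    exact region_props v a
  set Ex : A → Finset (Ω → ℝ) := fun a => (hprop a).1.toFinset with hExdef
  have hExt : ∀ a, (↑(Ex a) : Set (Ω → ℝ)) = Set.extremePoints ℝ (C a) :=
    fun a => (hprop a).1.coe_toFinset
  -- decomposition weights via choice
  have hWex : ∀ a (p : Ω → ℝ), p ∈ C a → ∃ w : (Ω → ℝ) → ℝ, (∀ e, 0 ≤ w e) ∧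
      (∑ e ∈ Ex a, w e = 1) ∧ ∀ ω, ∑ e ∈ Ex a, w e * e ω = p ω :=
    fun a p hp => exists_weights (hprop a).1 (hprop a).2 hp
  set W : A → (Ω → ℝ) → (Ω → ℝ) → ℝ :=
    fun a p e => if h : p ∈ C a then Classical.choose (hWex a p h) e else 0 with hWdef
  have hW0 : ∀ a p e, 0 ≤ W a p e := by
    intro a p e
    rw [hWdef]
    dsimp only
    split
    · exact (Classical.choose_spec (hWex a p ‹_›)).1 e
    · exact le_rfl
  have hWeq : ∀ a p (h : p ∈ C a) e, W a p e = Classical.choose (hWex a p h) e := by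
    intro a p h e
    rw [hWdef]
    dsimp only
    rw [dif_pos h]
  have hW1 : ∀ a p, p ∈ C a → ∑ e ∈ Ex a, W a p e = 1 := by
    intro a p h
    rw [Finset.sum_congr rfl fun e _ => hWeq a p h e]
    exact (Classical.choose_spec (hWex a p h)).2.1
  have hWp : ∀ a p, p ∈ C a → ∀ ω, ∑ e ∈ Ex a, W a p e * e ω = p ω := by
    intro a p h ω
    rw [Finset.sum_congr rfl fun e _ => by rw [hWeq a p h e]]
    exact (Classical.choose_spec (hWex a p h)).2.2 ω
  -- the set of extreme pairs
  set EF : Finset (A × (Ω → ℝ)) :=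
    Finset.univ.biUnion (fun a => (Ex a).image fun e => (a, e)) with hEFdef
  have hEFmem : ∀ y : A × (Ω → ℝ), y ∈ EF ↔ y.2 ∈ Ex y.1 := by
    intro y
    rw [hEFdef]
    simp only [Finset.mem_biUnion, Finset.mem_univ, true_and, Finset.mem_image]
    constructor
    · rintro ⟨a, e, he, rfl⟩
      exact he
    · intro h
      exact ⟨y.1, y.2, h, rfl⟩
  have hEFext : ∀ y : A × (Ω → ℝ), y ∈ EF ↔ y.2 ∈ Set.extremePoints ℝ (C y.1) := by
    intro y
    rw [hEFmem y, ← hExt y.1]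
    rfl
  -- conversion between finsupp sums and sums over the subtype
  have hconv : ∀ (μ : (A × (Ω → ℝ)) →₀ ℝ), μ.support ⊆ EF →
      ∀ g : A × (Ω → ℝ) → ℝ,
      ∑ y ∈ μ.support, μ y * g y = ∑ i : {y // y ∈ EF}, μ i.1 * g i.1 := by
    intro μ hsub g
    rw [Finset.univ_eq_attach, Finset.sum_attach EF (fun y => μ y * g y)]
    refine Finset.sum_subset hsub fun y _ hyn => ?_
    rw [Finsupp.notMem_support_iff.1 hyn, zero_mul]
  -- the compact feasible set
  set T : Set ({y // y ∈ EF} → ℝ) :=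
    {w | (∀ i, 0 ≤ w i) ∧ (∑ i, w i = 1) ∧ ∀ ω, ∑ i, w i * i.1.2 ω = p0 ω} with hTdef
  have hTclosed : IsClosed T := by
    rw [hTdef]
    have h1 : IsClosed {w : {y // y ∈ EF} → ℝ | ∀ i, 0 ≤ w i} := by
      rw [show {w : {y // y ∈ EF} → ℝ | ∀ i, 0 ≤ w i} = ⋂ i, {w | 0 ≤ w i} from by
        ext w; simp]
      exact isClosed_iInter fun i => isClosed_le continuous_const (continuous_apply i)
    have h2 : IsClosed {w : {y // y ∈ EF} → ℝ | ∑ i, w i = 1} :=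
      isClosed_eq (continuous_finset_sum _ fun i _ => continuous_apply i) continuous_const
    have h3 : IsClosed {w : {y // y ∈ EF} → ℝ | ∀ ω, ∑ i, w i * i.1.2 ω = p0 ω} := by
      rw [show {w : {y // y ∈ EF} → ℝ | ∀ ω, ∑ i, w i * i.1.2 ω = p0 ω}
        = ⋂ ω, {w | ∑ i, w i * i.1.2 ω = p0 ω} from by ext w; simp]
      exact isClosed_iInter fun ω => isClosed_eq
        (continuous_finset_sum _ fun i _ => (continuous_apply i).mul continuous_const)
        continuous_const
    have : {w : {y // y ∈ EF} → ℝ |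
        (∀ i, 0 ≤ w i) ∧ (∑ i, w i = 1) ∧ ∀ ω, ∑ i, w i * i.1.2 ω = p0 ω}
        = {w | ∀ i, 0 ≤ w i} ∩ ({w | ∑ i, w i = 1} ∩ {w | ∀ ω, ∑ i, w i * i.1.2 ω = p0 ω}) := by
      ext w; simp [Set.mem_inter_iff, and_assoc]
    rw [this]
    exact h1.inter (h2.inter h3)
  have hTcomp : IsCompact T := by
    refine (isCompact_univ_pi fun _ : {y // y ∈ EF} => (isCompact_Icc (a := (0:ℝ)) (b := 1))).of_isClosed_subset hTclosed ?_
    intro w hw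
    rw [hTdef] at hw
    intro i _
    refine ⟨hw.1 i, ?_⟩
    calc w i ≤ ∑ j, w j := Finset.single_le_sum (fun j _ => hw.1 j) (Finset.mem_univ i)
      _ = 1 := hw.2.1
  -- T is nonempty : decompose the trivial signal
  obtain ⟨a0, ha0⟩ := Finite.exists_max (fun a : A => ∑ ω, v a ω * p0 ω)
  have hp0C : p0 ∈ C a0 := by
    rw [hC a0]
    exact ⟨hp0, fun b => ha0 b⟩
  have hTne : T.Nonempty := by
    set π0 : (A × (Ω → ℝ)) →₀ ℝ := Finsupp.single (a0, p0) 1 with hπ0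
    have hsupp0 : π0.support = {(a0, p0)} := Finsupp.support_single_ne_zero _ one_ne_zero
    have hpos0 : ∀ x, 0 ≤ π0 x := by
      intro x
      rw [hπ0, Finsupp.single_apply]
      split <;> norm_num
    have hobe0 : ∀ x ∈ π0.support, x.2 ∈ C x.1 := by
      intro x hx
      rw [hsupp0, Finset.mem_singleton] at hx
      subst hx
      exact hp0C
    obtain ⟨πE, hE0, hEsupp, hEtot, hEbayes, -⟩ :=
      signal_decompose C Ex hExt W hW0 hW1 hWp u π0 hpos0 hobe0
    have hEsub : πE.support ⊆ EF := fun y hy => (hEFext y).2 (hEsupp y hy)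
    refine ⟨fun i => πE i.1, fun i => hE0 i.1, ?_, ?_⟩
    · have := hconv πE hEsub (fun _ => 1)
      simp only [mul_one] at this
      rw [← this, hEtot, hsupp0]
      simp [hπ0]
    · intro ω
      have := hconv πE hEsub (fun y => y.2 ω)
      rw [← this, hEbayes ω, hsupp0]
      simp [hπ0]
  -- maximize the objective over T
  set F : ({y // y ∈ EF} → ℝ) → ℝ := fun w => ∑ i, w i * ∑ ω, u i.1.1 ω * i.1.2 ω with hFdef
  have hFcont : Continuous F := by
    rw [hFdef]
    exact continuous_finset_sum _ fun i _ => (continuous_apply i).mul continuous_const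
  obtain ⟨wm, hwmT, hwmax⟩ := hTcomp.exists_isMaxOn hTne hFcont.continuousOn
  rw [hTdef] at hwmT
  -- the corresponding finsupp
  set πm : (A × (Ω → ℝ)) →₀ ℝ := Finsupp.onFinset EF
    (fun y => if h : y ∈ EF then wm ⟨y, h⟩ else 0)
    (fun y hy => by by_contra h; exact hy (dif_neg h)) with hπm
  have hπmval : ∀ i : {y // y ∈ EF}, πm i.1 = wm i := by
    intro i
    rw [hπm]
    simp only [Finsupp.onFinset_apply]
    rw [dif_pos i.2]
  have hπm0 : ∀ y, 0 ≤ πm y := by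
    intro y
    rw [hπm]
    simp only [Finsupp.onFinset_apply]
    split
    · exact hwmT.1 _
    · exact le_rfl
  have hπmsub : πm.support ⊆ EF := Finsupp.support_onFinset_subset
  have hπmext : ∀ y ∈ πm.support, y.2 ∈ Set.extremePoints ℝ (C y.1) :=
    fun y hy => (hEFext y).1 (hπmsub hy)
  have hπmconv : ∀ g : A × (Ω → ℝ) → ℝ,
      ∑ y ∈ πm.support, πm y * g y = ∑ i : {y // y ∈ EF}, wm i * g i.1 := by
    intro g
    rw [hconv πm hπmsub g]
    exact Finset.sum_congr rfl fun i _ => by rw [hπmval i]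
  have hπmSig : IsSignal πm := by
    rw [hSig]
    refine ⟨hπm0, ?_, ?_, ?_⟩
    · have := hπmconv (fun _ => 1)
      simp only [mul_one] at this
      rw [this, hwmT.2.1]
    · intro ω
      have := hπmconv (fun y => y.2 ω)
      rw [this]
      exact hwmT.2.2 ω
    · exact fun y hy => extremePoints_subset (hπmext y hy)
  have hπmF : val πm = F wm := by
    rw [hval, hπmconv (fun y => ∑ ω, u y.1 ω * y.2 ω), hFdef]
  refine ⟨πm, hπmSig, ?_, hπmext⟩
  intro π' hπ'
  rw [hSig] at hπ'
  obtain ⟨h'0, h'tot, h'bayes, h'obe⟩ := hπ'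
  obtain ⟨π'', h''0, h''supp, h''tot, h''bayes, h''val⟩ :=
    signal_decompose C Ex hExt W hW0 hW1 hWp u π' h'0 h'obe
  have h''sub : π''.support ⊆ EF := fun y hy => (hEFext y).2 (h''supp y hy)
  have hwT : (fun i : {y // y ∈ EF} => π'' i.1) ∈ T := by
    rw [hTdef]
    refine ⟨fun i => h''0 i.1, ?_, ?_⟩
    · have := hconv π'' h''sub (fun _ => 1)
      simp only [mul_one] at this
      rw [← this, h''tot, h'tot]
    · intro ω
      have := hconv π'' h''sub (fun y => y.2 ω)
      rw [← this, h''bayes ω]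
      exact h'bayes ω
  have hle : F (fun i => π'' i.1) ≤ F wm := hwmax hwT
  calc val π' = ∑ y ∈ π''.support, π'' y * ∑ ω, u y.1 ω * y.2 ω := by
        rw [hval]; exact h''val.symm
    _ = F (fun i => π'' i.1) := by
        rw [hconv π'' h''sub (fun y => ∑ ω, u y.1 ω * y.2 ω), hFdef]
    _ ≤ F wm := hle
    _ = val πm := hπmF.symm
end

section
/- Let Ω be finite with prior p0 of full support, A finite, u,v: A × Ω → ℝ. A Bayes-plausible obedient signal π over action–posterior pairs is optimal for the sender if and only if there exists a vector λ ∈ ℝ^{|Ω|} such that (i) for every (a,p) in the support of π, λ·p = Σ_ω u(a,ω)p(ω), and (ii) for every p ∈ Δ(Ω), λ·p ≥ Σ_ω u(a*(p),ω)p(ω), where a*(p) is the receiver-optimal action at p (ties broken in the sender's favor). -/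
open Finset

lemma aux_sum_off_image {α : Type*} [AddCommMonoid α] {ι : Type*} [Fintype ι] {N : ℕ}
    (e : ι ↪ Fin N) (F : Fin N → α) (hF : ∀ j, (¬ ∃ i, e i = j) → F j = 0) :
    ∑ j, F j = ∑ i, F (e i) := by
  rw [← Finset.sum_map Finset.univ e F]
  symm
  apply Finset.sum_subset (Finset.subset_univ _)
  intro j _ hj
  apply hF
  intro ⟨i, hi⟩
  exact hj (Finset.mem_map.2 ⟨i, Finset.mem_univ _, hi⟩)

lemma aux_isCompact_convexHull {E : Type} [NormedAddCommGroup E] [NormedSpace ℝ E]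
    [FiniteDimensional ℝ E] {D : Set E} (hD : IsCompact D) (hne : D.Nonempty) :
    IsCompact (convexHull ℝ D) := by
  classical
  obtain ⟨d0, hd0⟩ := hne
  set N := Module.finrank ℝ E + 1 with hN
  have hcont : Continuous (fun q : (Fin N → ℝ) × (Fin N → E) => ∑ i, q.1 i • q.2 i) := by
    apply continuous_finset_sum
    intro i _
    exact ((continuous_apply i).comp continuous_fst).smul
      ((continuous_apply i).comp continuous_snd)
  have hset : IsCompact ((stdSimplex ℝ (Fin N)) ×ˢ (Set.pi Set.univ fun _ : Fin N => D)) :=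
    (isCompact_stdSimplex _ _).prod (isCompact_univ_pi fun _ => hD)
  have himg := hset.image hcont
  have heq : convexHull ℝ D =
      (fun q : (Fin N → ℝ) × (Fin N → E) => ∑ i, q.1 i • q.2 i) ''
        ((stdSimplex ℝ (Fin N)) ×ˢ (Set.pi Set.univ fun _ : Fin N => D)) := by
    apply Set.Subset.antisymm
    · intro x hx
      obtain ⟨ι, hι, z, w, hrange, hindep, hpos, hsum, hx⟩ :=
        eq_pos_convex_span_of_mem_convexHull hx
      have hne : Nonempty ι := by
        by_contra h
        rw [not_nonempty_iff] at h
        simp at hsum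
      have hcard : Fintype.card ι ≤ N := by
        have h1 := hindep.finrank_vectorSpan_add_one
        have h2 : Module.finrank ℝ (vectorSpan ℝ (Set.range z)) ≤ Module.finrank ℝ E :=
          Submodule.finrank_le _
      
        omega
      obtain ⟨e⟩ : Nonempty (ι ↪ Fin N) :=
        Function.Embedding.nonempty_of_card_le (by simpa using hcard)
      set w' : Fin N → ℝ := fun j => if h : ∃ i, e i = j then w h.choose else 0 with hw'
      set z' : Fin N → E := fun j => if h : ∃ i, e i = j then z h.choose else d0 with hz'
      have hwe : ∀ i, w' (e i) = w i := by
        intro i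
        have h : ∃ i', e i' = e i := ⟨i, rfl⟩
        simp only [hw', dif_pos h]
        rw [e.injective h.choose_spec]
      have hze : ∀ i, z' (e i) = z i := by
        intro i
        have h : ∃ i', e i' = e i := ⟨i, rfl⟩
        simp only [hz', dif_pos h]
        rw [e.injective h.choose_spec]
      refine ⟨(w', z'), ⟨⟨fun j => ?_, ?_⟩, fun j _ => ?_⟩, ?_⟩
      · by_cases h : ∃ i, e i = j
        · simp only [hw', dif_pos h]; exact (hpos _).le
        · simp [hw', dif_neg h]
      · rw [aux_sum_off_image e w' (fun j hj => by simp [hw', dif_neg hj])]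
        simpa only [hwe] using hsum
      · by_cases h : ∃ i, e i = j
        · simp only [hz', dif_pos h]
          exact hrange ⟨_, rfl⟩
        · simpa [hz', dif_neg h] using hd0
      · simp only
        rw [aux_sum_off_image e (fun j => w' j • z' j) (fun j hj => by simp [hw', dif_neg hj])]
        simp only [hwe, hze]
        exact hx
    · rintro x ⟨⟨w, z⟩, ⟨⟨hw0, hw1⟩, hz⟩, rfl⟩
      show (∑ i, w i • z i) ∈ convexHull ℝ D
      rw [← Finset.univ.centerMass_eq_of_sum_1 _ hw1]
      exact Finset.centerMass_mem_convexHull _ (fun i _ => hw0 i) (by rw [hw1]; norm_num)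
        (fun i _ => hz i (Set.mem_univ _))
  rw [heq]
  exact himg

lemma aux_finsupp_sum {α : Type} {ι : Type} (t : Finset ι) (F : ι → α) (w : ι → ℝ) (G : α → ℝ) :
    ∑ x ∈ (∑ i ∈ t, Finsupp.single (F i) (w i)).support,
      (∑ i ∈ t, Finsupp.single (F i) (w i)) x * G x = ∑ i ∈ t, w i * G (F i) := by
  classical
  have h : ∑ x ∈ (∑ i ∈ t, Finsupp.single (F i) (w i)).support,
      (∑ i ∈ t, Finsupp.single (F i) (w i)) x * G x
      = (∑ i ∈ t, Finsupp.single (F i) (w i)).sum (fun x r => r * G x) := rfl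
  rw [h, ← Finsupp.sum_finsetSum_index (fun x => zero_mul (G x)) (fun x r s => add_mul r s (G x))]
  exact Finset.sum_congr rfl fun i _ => Finsupp.sum_single_index (zero_mul _)

lemma aux_swap {Ω β : Type} [Fintype Ω] (s : Finset β) (c : β → ℝ) (q : β → Ω → ℝ)
    (lam : Ω → ℝ) :
    ∑ x ∈ s, c x * ∑ ω, lam ω * q x ω = ∑ ω, lam ω * ∑ x ∈ s, c x * q x ω := by
  simp_rw [Finset.mul_sum]
  rw [Finset.sum_comm]
  exact Finset.sum_congr rfl fun ω _ => Finset.sum_congr rfl fun x _ => by ring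

lemma aux_prod_sum {ι M N : Type*} [AddCommMonoid M] [AddCommMonoid N] (t : Finset ι)
    (f : ι → M × N) : (∑ i ∈ t, f i) = (∑ i ∈ t, (f i).1, ∑ i ∈ t, (f i).2) := by
  classical
  induction t using Finset.induction with
  | empty => simp; rfl
  | insert _ _ h ih => simp [Finset.sum_insert h, ih, Prod.ext_iff]
/-- Kamenica–Gentzkow concavification characterization: a Bayes-plausible
obedient signal is sender-optimal iff there is a hyperplane `λ` that coincides
with the sender's payoff on the support and lies weakly above the sender's
indirect utility everywhere on the simplex. -/
theorem stmt_4 {Ω A : Type} [Fintype Ω] [Fintype A] [Nonempty A]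
    (p0 : Ω → ℝ) (hp0 : p0 ∈ stdSimplex ℝ Ω) (hfull : ∀ ω, 0 < p0 ω)
    (u v : A → Ω → ℝ)
    (IsSignal : ((A × (Ω → ℝ)) →₀ ℝ) → Prop)
    (hSig : ∀ π : (A × (Ω → ℝ)) →₀ ℝ, IsSignal π ↔
      ((∀ x, 0 ≤ π x) ∧ (∑ x ∈ π.support, π x = 1) ∧
       (∀ ω, ∑ x ∈ π.support, π x * x.2 ω = p0 ω) ∧
       (∀ x ∈ π.support, x.2 ∈ stdSimplex ℝ Ω ∧
          ∀ b : A, ∑ ω, v b ω * x.2 ω ≤ ∑ ω, v x.1 ω * x.2 ω)))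
    (val : ((A × (Ω → ℝ)) →₀ ℝ) → ℝ)
    (hval : ∀ π : (A × (Ω → ℝ)) →₀ ℝ,
      val π = ∑ x ∈ π.support, π x * ∑ ω, u x.1 ω * x.2 ω)
    (π : (A × (Ω → ℝ)) →₀ ℝ) (hπ : IsSignal π) :
    (∀ π', IsSignal π' → val π' ≤ val π) ↔
      ∃ lam : Ω → ℝ,
        (∀ x ∈ π.support, ∑ ω, lam ω * x.2 ω = ∑ ω, u x.1 ω * x.2 ω) ∧
        (∀ p ∈ stdSimplex ℝ Ω, ∀ a : A,
          (∀ b : A, ∑ ω, v b ω * p ω ≤ ∑ ω, v a ω * p ω) →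
            ∑ ω, u a ω * p ω ≤ ∑ ω, lam ω * p ω) := by
  classical
  obtain ⟨hπ0, hπ1, hπbayes, hπob⟩ := (hSig π).mp hπ
  set V := val π with hV
  constructor
  · intro hopt
    set Ob : Set (A × (Ω → ℝ)) := {x | x.2 ∈ stdSimplex ℝ Ω ∧
        ∀ b : A, ∑ ω, v b ω * x.2 ω ≤ ∑ ω, v x.1 ω * x.2 ω} with hOb
    set g : (A × (Ω → ℝ)) → (Ω → ℝ) × ℝ := fun x => (x.2, ∑ ω, u x.1 ω * x.2 ω) with hg
    set D : Set ((Ω → ℝ) × ℝ) := g '' Ob with hDdef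
    have hDcomp : IsCompact D := by
      have hDeq : D = ⋃ a : A, (fun p : Ω → ℝ => (p, ∑ ω, u a ω * p ω)) ''
          (stdSimplex ℝ Ω ∩ {p | ∀ b : A, ∑ ω, v b ω * p ω ≤ ∑ ω, v a ω * p ω}) := by
        ext q
        constructor
        · rintro ⟨⟨a, p⟩, ⟨hp1, hp2⟩, rfl⟩
          exact Set.mem_iUnion.2 ⟨a, ⟨p, ⟨hp1, hp2⟩, rfl⟩⟩
        · intro hq
          obtain ⟨a, p, ⟨hp1, hp2⟩, rfl⟩ := Set.mem_iUnion.1 hq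
          exact ⟨(a, p), ⟨hp1, hp2⟩, rfl⟩
      rw [hDeq]
      apply isCompact_iUnion
      intro a
      apply IsCompact.image
      · apply (isCompact_stdSimplex ℝ Ω).inter_right
        have : {p : Ω → ℝ | ∀ b : A, ∑ ω, v b ω * p ω ≤ ∑ ω, v a ω * p ω}
            = ⋂ b : A, {p : Ω → ℝ | ∑ ω, v b ω * p ω ≤ ∑ ω, v a ω * p ω} := by
          ext p; simp
        rw [this]
        refine isClosed_iInter fun b => isClosed_le ?_ ?_ <;>
          exact continuous_finset_sum _ fun ω _ => continuous_const.mul (continuous_apply ω)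
      · exact continuous_id.prodMk
          (continuous_finset_sum _ fun ω _ => continuous_const.mul (continuous_apply ω))
    have hsuppne : π.support.Nonempty := by
      rcases Finset.eq_empty_or_nonempty π.support with h | h
      · exfalso; rw [h] at hπ1; simp at hπ1
      · exact h
    have hDne : D.Nonempty := by
      obtain ⟨x, hx⟩ := hsuppne
      exact ⟨g x, x, hπob x hx, rfl⟩
    set K := convexHull ℝ D with hK
    have hKcomp : IsCompact K := aux_isCompact_convexHull hDcomp hDne
    have hKconv : Convex ℝ K := convex_convexHull ℝ D
    have hmemK : ((p0, V) : (Ω → ℝ) × ℝ) ∈ K := by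
      have hcm : π.support.centerMass ⇑π g = ((p0, V) : (Ω → ℝ) × ℝ) := by
        rw [Finset.centerMass_eq_of_sum_1 _ _ hπ1, aux_prod_sum, Prod.ext_iff]
        constructor
        · show (∑ x ∈ π.support, (π x • g x).1) = p0
          funext ω
          rw [Finset.sum_apply]
          have : ∀ x, ((π x • g x).1) ω = π x * x.2 ω := by
            intro x; simp [hg]
          rw [Finset.sum_congr rfl fun x _ => this x]
          exact hπbayes ω
        · show (∑ x ∈ π.support, (π x • g x).2) = V
          have : ∀ x, (π x • g x).2 = π x * ∑ ω, u x.1 ω * x.2 ω := by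
            intro x; simp [hg]
          rw [Finset.sum_congr rfl fun x _ => this x]
          rw [hV, hval]
      rw [← hcm]
      exact Finset.centerMass_mem_convexHull _ (fun x hx => hπ0 x)
        (by rw [hπ1]; norm_num) (fun x hx => ⟨x, hπob x hx, rfl⟩)
    have hkey : ∀ q : (Ω → ℝ) × ℝ, q ∈ K → q.1 = p0 → q.2 ≤ V := by
      rintro q hq hq1
      rw [hK, _root_.convexHull_eq] at hq
      obtain ⟨ι, t, w, z, hw0, hw1, hzD, hcm⟩ := hq
      rw [Finset.centerMass_eq_of_sum_1 _ _ hw1, aux_prod_sum, Prod.ext_iff] at hcm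
      obtain ⟨hcm1, hcm2⟩ := hcm
      have e1 : ∀ ω, ∑ i ∈ t, w i * (z i).1 ω = p0 ω := by
        intro ω
        have h := congrArg (fun r : Ω → ℝ => r ω) hcm1
        simp only [hq1] at h
        rw [← h, Finset.sum_apply]
        exact Finset.sum_congr rfl fun i _ => by simp
      have e2 : ∑ i ∈ t, w i * (z i).2 = q.2 := by
        rw [← hcm2]
        exact Finset.sum_congr rfl fun i _ => by simp
      set F : ι → A × (Ω → ℝ) :=
        fun i => if h : i ∈ t then (hzD i h).choose else Classical.arbitrary _ with hF
      have hFspec : ∀ i ∈ t, F i ∈ Ob ∧ g (F i) = z i := by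
        intro i hi
        simp only [hF, dif_pos hi]
        exact ⟨(hzD i hi).choose_spec.1, (hzD i hi).choose_spec.2⟩
      set π' : (A × (Ω → ℝ)) →₀ ℝ := ∑ i ∈ t, Finsupp.single (F i) (w i) with hπ'def
      have hsig' : IsSignal π' := by
        rw [hSig]
        refine ⟨?_, ?_, ?_, ?_⟩
        · intro x
          rw [hπ'def, Finset.sum_apply']
          apply Finset.sum_nonneg
          intro i hi
          rw [Finsupp.single_apply]
          split
          · exact hw0 i hi
          · exact le_refl 0
        · have h2 := aux_finsupp_sum t F w (fun _ => 1)
          simp only [mul_one] at h2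
          rw [hπ'def, h2]
          exact hw1
        · intro ω
          rw [hπ'def, aux_finsupp_sum t F w (fun x => x.2 ω), ← e1 ω]
          apply Finset.sum_congr rfl
          intro i hi
          have h3 : (F i).2 = (z i).1 := by rw [← (hFspec i hi).2]
          rw [h3]
        · intro x hx
          have hex : ∃ i ∈ t, F i = x := by
            by_contra hcon
            push_neg at hcon
            have hz0 : π' x = 0 := by
              rw [hπ'def, Finset.sum_apply']
              apply Finset.sum_eq_zero
              intro i hi
              rw [Finsupp.single_apply, if_neg (hcon i hi)]
            exact Finsupp.mem_support_iff.1 hx hz0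
          obtain ⟨i, hi, rfl⟩ := hex
          exact (hFspec i hi).1
      have hvq : val π' = q.2 := by
        rw [hval, hπ'def, aux_finsupp_sum t F w (fun x => ∑ ω, u x.1 ω * x.2 ω), ← e2]
        apply Finset.sum_congr rfl
        intro i hi
        have h3 : (∑ ω, u (F i).1 ω * (F i).2 ω) = (z i).2 := by
          rw [← (hFspec i hi).2]
        rw [h3]
      calc q.2 = val π' := hvq.symm
        _ ≤ V := hopt π' hsig' 
    have hP : ∀ ε : ℝ, 0 < ε → ∃ lam : Ω → ℝ,
        (∀ p ∈ stdSimplex ℝ Ω, ∀ a : A,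
          (∀ b : A, ∑ ω, v b ω * p ω ≤ ∑ ω, v a ω * p ω) →
            ∑ ω, u a ω * p ω ≤ ∑ ω, lam ω * p ω) ∧
        V ≤ ∑ ω, lam ω * p0 ω ∧ ∑ ω, lam ω * p0 ω ≤ V + ε := by
      intro ε hε
      set C : Set ((Ω → ℝ) × ℝ) := {p0} ×ˢ Set.Ici (V + ε) with hC
      have hCconv : Convex ℝ C := (convex_singleton p0).prod (convex_Ici _)
      have hCclosed : IsClosed C := isClosed_singleton.prod isClosed_Ici
      have hdisj : Disjoint K C := by
        rw [Set.disjoint_left]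
        intro q hqK hqC
        rw [hC, Set.mem_prod] at hqC
        have h1 := hkey q hqK (by simpa using hqC.1)
        have h2 : V + ε ≤ q.2 := hqC.2
        linarith
      obtain ⟨f, s, s', hfK, hss', hfC⟩ :=
        geometric_hahn_banach_compact_closed hKconv hKcomp hCconv hCclosed hdisj
      set c : ℝ := f ((0 : Ω → ℝ), (1 : ℝ)) with hc
      have hdecomp : ∀ (p : Ω → ℝ) (T : ℝ), f (p, T) = f (p, 0) + T * c := by
        intro p T
        have h : ((p, T) : (Ω → ℝ) × ℝ) = (p, 0) + T • ((0 : Ω → ℝ), (1 : ℝ)) := by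
          rw [Prod.ext_iff]; constructor <;> simp
        rw [h, map_add, map_smul, smul_eq_mul]
      have hKV : f (p0, V) < s := hfK _ hmemK
      have hCge : ∀ T, V + ε ≤ T → s' < f (p0, T) := by
        intro T hT
        exact hfC _ (by rw [hC, Set.mem_prod]; exact ⟨rfl, hT⟩)
      have hcpos : 0 < c := by
        rcases lt_trichotomy c 0 with h | h | h
        · exfalso
          set T := max (V + ε) ((s' - f (p0, 0)) / c) with hT
          have h1 := hCge T (le_max_left _ _)
          rw [hdecomp] at h1
          have h2 : T * c ≤ ((s' - f (p0, 0)) / c) * c :=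
            mul_le_mul_of_nonpos_right (le_max_right _ _) h.le
          rw [div_mul_cancel₀ _ h.ne] at h2
          linarith
        · exfalso
          have h1 := hCge (V + ε) le_rfl
          rw [hdecomp] at h1
          rw [hdecomp] at hKV
          rw [h] at h1 hKV
          linarith
        · exact h
      set lamε : Ω → ℝ := fun ω => (s - f (Pi.single ω 1, 0)) / c with hlamε
      have hrep : ∀ p : Ω → ℝ, ((p, (0 : ℝ)) : (Ω → ℝ) × ℝ) =
          ∑ ω, p ω • ((Pi.single ω 1 : Ω → ℝ), (0 : ℝ)) := by
        intro p
        rw [aux_prod_sum, Prod.ext_iff]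
        constructor
        · show p = ∑ ω, (p ω • ((Pi.single ω 1 : Ω → ℝ), (0 : ℝ))).1
          funext j
          rw [Finset.sum_apply]
          have : ∀ ω, ((p ω • ((Pi.single ω 1 : Ω → ℝ), (0 : ℝ))).1) j
              = if j = ω then p ω else 0 := by
            intro ω
            simp [Pi.single_apply, mul_ite]
          rw [Finset.sum_congr rfl fun ω _ => this ω]
          simp
        · show (0 : ℝ) = ∑ ω, (p ω • ((Pi.single ω 1 : Ω → ℝ), (0 : ℝ))).2
          simp
      have hfp : ∀ p : Ω → ℝ, f (p, 0) = ∑ ω, p ω * f (Pi.single ω 1, 0) := by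
        intro p
        rw [hrep p, map_sum]
        exact Finset.sum_congr rfl fun ω _ => by rw [map_smul, smul_eq_mul]
      have hlin : ∀ p : Ω → ℝ, ∑ ω, p ω = 1 →
          ∑ ω, lamε ω * p ω = (s - f (p, 0)) / c := by
        intro p hp
        rw [hfp p, eq_div_iff hcpos.ne', Finset.sum_mul]
        have h6 : ∀ ω : Ω, lamε ω * p ω * c = s * p ω - p ω * f (Pi.single ω 1, 0) := by
          intro ω
          rw [hlamε]
          field_simp
        rw [Finset.sum_congr rfl fun ω _ => h6 ω, Finset.sum_sub_distrib, ← Finset.mul_sum,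
          hp, mul_one]
      have hA : ∀ p ∈ stdSimplex ℝ Ω, ∀ a : A,
          (∀ b : A, ∑ ω, v b ω * p ω ≤ ∑ ω, v a ω * p ω) →
            ∑ ω, u a ω * p ω ≤ ∑ ω, lamε ω * p ω := by
        intro p hp a hob
        have hmem : ((p, ∑ ω, u a ω * p ω) : (Ω → ℝ) × ℝ) ∈ K :=
          subset_convexHull ℝ D ⟨(a, p), ⟨hp, hob⟩, rfl⟩
        have h1 := hfK _ hmem
        rw [hdecomp] at h1
        rw [hlin p hp.2, le_div_iff₀ hcpos]
        linarith
      refine ⟨lamε, hA, ?_, ?_⟩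
      · calc V = ∑ x ∈ π.support, π x * ∑ ω, u x.1 ω * x.2 ω := by rw [hV, hval]
          _ ≤ ∑ x ∈ π.support, π x * ∑ ω, lamε ω * x.2 ω :=
              Finset.sum_le_sum fun x hx => mul_le_mul_of_nonneg_left
                (hA x.2 (hπob x hx).1 x.1 (hπob x hx).2) (hπ0 x)
          _ = ∑ ω, lamε ω * ∑ x ∈ π.support, π x * x.2 ω := aux_swap _ _ _ _
          _ = ∑ ω, lamε ω * p0 ω := Finset.sum_congr rfl fun ω _ => by rw [hπbayes ω]
      · have h1 := hCge (V + ε) le_rfl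
        rw [hdecomp] at h1
        rw [hlin p0 hp0.2, div_le_iff₀ hcpos]
        linarith
    choose lamseq hseq using fun n : ℕ => hP (1 / ((n : ℝ) + 1)) (by positivity)
    set m : Ω → ℝ := fun ω => Finset.univ.inf' Finset.univ_nonempty (fun a => u a ω) with hm
    have hlow : ∀ n ω, m ω ≤ lamseq n ω := by
      intro n ω
      have hpmem : (Pi.single ω 1 : Ω → ℝ) ∈ stdSimplex ℝ Ω := by
        constructor
        · intro j
          rw [Pi.single_apply]
          split <;> norm_num
        · simp [Pi.single_apply]
      obtain ⟨a, _, ha⟩ := Finset.exists_max_image Finset.univ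
        (fun a => ∑ ω', v a ω' * (Pi.single ω 1 : Ω → ℝ) ω') ⟨Classical.arbitrary A, Finset.mem_univ _⟩
      have h := (hseq n).1 _ hpmem a fun b => ha b (Finset.mem_univ b)
      have hu : ∑ ω', u a ω' * (Pi.single ω 1 : Ω → ℝ) ω' = u a ω := by
        simp [Pi.single_apply, mul_ite, Finset.sum_ite_eq]
      have hlam : ∑ ω', lamseq n ω' * (Pi.single ω 1 : Ω → ℝ) ω' = lamseq n ω := by
        simp [Pi.single_apply, mul_ite, Finset.sum_ite_eq]
      rw [hu, hlam] at h
      exact le_trans (Finset.inf'_le _ (Finset.mem_univ a)) h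
    set C0 : ℝ := ∑ ω, m ω * p0 ω with hC0
    set M : Ω → ℝ := fun ω => m ω + (V + 1 - C0) / p0 ω with hM
    have hup : ∀ n ω, lamseq n ω ≤ M ω := by
      intro n ω
      have hcast : (0 : ℝ) ≤ (n : ℝ) := Nat.cast_nonneg n
      have hεle : 1 / ((n : ℝ) + 1) ≤ 1 := by
        rw [div_le_one (by positivity)]
        linarith
      have h2 : ∑ ω', lamseq n ω' * p0 ω' ≤ V + 1 :=
        le_trans (hseq n).2.2 (by linarith)
      have h3 : (lamseq n ω - m ω) * p0 ω ≤ ∑ ω', (lamseq n ω' - m ω') * p0 ω' :=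
        Finset.single_le_sum (f := fun ω' => (lamseq n ω' - m ω') * p0 ω')
          (fun ω' _ => mul_nonneg (sub_nonneg.2 (hlow n ω')) (hfull ω').le)
          (Finset.mem_univ ω)
      have h4 : ∑ ω', (lamseq n ω' - m ω') * p0 ω' = ∑ ω', lamseq n ω' * p0 ω' - C0 := by
        rw [hC0, ← Finset.sum_sub_distrib]
        exact Finset.sum_congr rfl fun ω' _ => by ring
      have h5 : (lamseq n ω - m ω) * p0 ω ≤ V + 1 - C0 := by
        rw [h4] at h3; linarith
      have h6 : lamseq n ω - m ω ≤ (V + 1 - C0) / p0 ω :=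
        (le_div_iff₀ (hfull ω)).2 h5
      have h7 : M ω = m ω + (V + 1 - C0) / p0 ω := by rw [hM]
      rw [h7]
      linarith
    have hbox : ∀ n, lamseq n ∈ Set.pi Set.univ (fun ω => Set.Icc (m ω) (M ω)) :=
      fun n ω _ => ⟨hlow n ω, hup n ω⟩
    obtain ⟨l, _, φ, hφ, hconv⟩ :=
      (isCompact_univ_pi fun ω => isCompact_Icc).tendsto_subseq hbox
    have hii : ∀ p ∈ stdSimplex ℝ Ω, ∀ a : A,
        (∀ b : A, ∑ ω, v b ω * p ω ≤ ∑ ω, v a ω * p ω) →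
          ∑ ω, u a ω * p ω ≤ ∑ ω, l ω * p ω := by
      intro p hp a hob
      have hcont : Continuous (fun lam' : Ω → ℝ => ∑ ω, lam' ω * p ω) :=
        continuous_finset_sum _ fun ω _ => (continuous_apply ω).mul continuous_const
      exact ge_of_tendsto' ((hcont.tendsto l).comp hconv)
        (fun n => (hseq (φ n)).1 p hp a hob)
    have hVeq : ∑ ω, l ω * p0 ω = V := by
      have hcont : Continuous (fun lam' : Ω → ℝ => ∑ ω, lam' ω * p0 ω) :=
        continuous_finset_sum _ fun ω _ => (continuous_apply ω).mul continuous_const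
      have h1 : Filter.Tendsto (fun n => ∑ ω, lamseq (φ n) ω * p0 ω) Filter.atTop
          (nhds (∑ ω, l ω * p0 ω)) := (hcont.tendsto l).comp hconv
      have h2 : Filter.Tendsto (fun n : ℕ => V + 1 / ((φ n : ℝ) + 1)) Filter.atTop
          (nhds (V + 0)) :=
        tendsto_const_nhds.add
          (tendsto_one_div_add_atTop_nhds_zero_nat.comp hφ.tendsto_atTop)
      rw [add_zero] at h2
      have h3 : Filter.Tendsto (fun n => ∑ ω, lamseq (φ n) ω * p0 ω) Filter.atTop (nhds V) :=
        tendsto_of_tendsto_of_tendsto_of_le_of_le tendsto_const_nhds h2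
          (fun n => (hseq (φ n)).2.1) (fun n => (hseq (φ n)).2.2)
      exact tendsto_nhds_unique h1 h3
    refine ⟨l, ?_, hii⟩
    intro x hx
    have hnonneg : ∀ y ∈ π.support,
        0 ≤ π y * (∑ ω, l ω * y.2 ω) - π y * (∑ ω, u y.1 ω * y.2 ω) := by
      intro y hy
      have := hii y.2 (hπob y hy).1 y.1 (hπob y hy).2
      have := mul_le_mul_of_nonneg_left this (hπ0 y)
      linarith
    have hsum0 : ∑ y ∈ π.support,
        (π y * (∑ ω, l ω * y.2 ω) - π y * (∑ ω, u y.1 ω * y.2 ω)) = 0 := by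
      rw [Finset.sum_sub_distrib]
      have hA : ∑ y ∈ π.support, π y * ∑ ω, l ω * y.2 ω = ∑ ω, l ω * p0 ω := by
        rw [aux_swap]
        exact Finset.sum_congr rfl fun ω _ => by rw [hπbayes ω]
      rw [hA, hVeq, hV, hval]
      ring
    have hterm := (Finset.sum_eq_zero_iff_of_nonneg hnonneg).1 hsum0 x hx
    have hxne : π x ≠ 0 := Finsupp.mem_support_iff.1 hx
    have h5 : π x * ((∑ ω, l ω * x.2 ω) - (∑ ω, u x.1 ω * x.2 ω)) = 0 := by
      rw [mul_sub]; linarith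
    rcases mul_eq_zero.1 h5 with h | h
    · exact absurd h hxne
    · linarith [sub_eq_zero.1 h]
  · rintro ⟨lam, hlam1, hlam2⟩ π' hsig'
    obtain ⟨h0', h1', hb', hob'⟩ := (hSig π').mp hsig'
    rw [hval π']
    calc ∑ x ∈ π'.support, π' x * ∑ ω, u x.1 ω * x.2 ω
        ≤ ∑ x ∈ π'.support, π' x * ∑ ω, lam ω * x.2 ω :=
          Finset.sum_le_sum fun x hx =>
            mul_le_mul_of_nonneg_left (hlam2 x.2 (hob' x hx).1 x.1 (hob' x hx).2) (h0' x)
      _ = ∑ ω, lam ω * p0 ω := by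
          rw [aux_swap]
          exact Finset.sum_congr rfl fun ω _ => by rw [hb' ω]
      _ = ∑ x ∈ π.support, π x * ∑ ω, lam ω * x.2 ω := by
          rw [aux_swap]
          exact (Finset.sum_congr rfl fun ω _ => by rw [hπbayes ω]).symm
      _ = ∑ x ∈ π.support, π x * ∑ ω, u x.1 ω * x.2 ω :=
          Finset.sum_congr rfl fun x hx => by rw [hlam1 x hx]
      _ = V := by rw [hV, hval]
end

section
/- (Single-menu falsification, sufficiency direction) Let Ω be finite, p0 a full-support prior, A a finite menu with receiver payoffs v, and σ a state-dependent stochastic choice with revealed recommendation distribution π_σ satisfying NIAS. Suppose (1) π_σ is informative (not the point mass at p0), and (2) there exists an action a* that is receiver-optimal at p0 and a posterior p with (a*,p) in the support of π_σ such that p + ε(p − p0) ∈ C_{A,a*} for some ε > 0. Then for NO sender utility u: A × Ω → ℝ is π_σ an optimal signal that strictly benefits from persuasion (i.e., π_σ is inconsistent with nontrivial Bayesian persuasion). -/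
open Finset

private lemma lc_eq {α : Type} (μ : α →₀ ℝ) (f : α → ℝ) :
    ∑ x ∈ μ.support, μ x * f x = Finsupp.linearCombination ℝ f μ := by
  rw [Finsupp.linearCombination_apply, Finsupp.sum]
  simp [smul_eq_mul]

/-- Single-menu falsification: if the revealed recommendation distribution is
informative and some revealed posterior of a receiver-optimal-at-the-prior
action can be pushed strictly away from the prior while staying in its
optimality region, then no sender utility makes it an optimal signal that
strictly benefits from persuasion. -/
theorem stmt_6 {Ω A : Type} [Fintype Ω] [Fintype A] [Nonempty A]
    (p0 : Ω → ℝ) (hp0 : p0 ∈ stdSimplex ℝ Ω) (hfull : ∀ ω, 0 < p0 ω)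
    (v : A → Ω → ℝ)
    (C : A → Set (Ω → ℝ))
    (hC : ∀ a, C a = {q : Ω → ℝ | q ∈ stdSimplex ℝ Ω ∧
        ∀ b : A, ∑ ω, v b ω * q ω ≤ ∑ ω, v a ω * q ω})
    (π : (A × (Ω → ℝ)) →₀ ℝ)
    (hpos : ∀ x, 0 ≤ π x)
    (hbayes : ∀ ω, ∑ x ∈ π.support, π x * x.2 ω = p0 ω)
    (hNIAS : ∀ x ∈ π.support, x.2 ∈ C x.1)
    (hinf : ∃ x ∈ π.support, x.2 ≠ p0)
    (hsplit : ∃ (astar : A) (p : Ω → ℝ) (ε : ℝ), 0 < ε ∧ p0 ∈ C astar ∧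
      (astar, p) ∈ π.support ∧ (fun ω => p ω + ε * (p ω - p0 ω)) ∈ C astar) :
    ∀ u : A → Ω → ℝ,
      ¬ ((∀ π' : (A × (Ω → ℝ)) →₀ ℝ,
            ((∀ x, 0 ≤ π' x) ∧ (∀ ω, ∑ x ∈ π'.support, π' x * x.2 ω = p0 ω) ∧
             (∀ x ∈ π'.support, x.2 ∈ C x.1)) →
            ∑ x ∈ π'.support, π' x * ∑ ω, u x.1 ω * x.2 ω ≤
              ∑ x ∈ π.support, π x * ∑ ω, u x.1 ω * x.2 ω) ∧
         (∀ a : A, p0 ∈ C a →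
            ∑ ω, u a ω * p0 ω <
              ∑ x ∈ π.support, π x * ∑ ω, u x.1 ω * x.2 ω)) := by
  intro u
  classical
  rintro ⟨hopt, hstrict⟩
  obtain ⟨astar, p, ε, hε, hp0C, hmem, hp'C⟩ := hsplit
  set p' : Ω → ℝ := fun ω => p ω + ε * (p ω - p0 ω) with hp'def
  set w : ℝ := π (astar, p) with hwdef
  have hw : 0 < w :=
    lt_of_le_of_ne (hpos _) (Ne.symm (Finsupp.mem_support_iff.mp hmem))
  have hε1 : (0:ℝ) < 1 + ε := by linarith
  set c : ℝ := w / (1 + ε) with hcdef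
  set lam : ℝ := w * ε / (1 + ε) with hlamdef
  have hc : 0 < c := div_pos hw hε1
  have hlam : 0 < lam := div_pos (mul_pos hw hε) hε1
  -- total mass of π is 1
  have hsum1 : ∑ ω, p0 ω = 1 := hp0.2
  have hmass : ∑ x ∈ π.support, π x = 1 := by
    have h1 : ∀ x ∈ π.support, π x = π x * ∑ ω, x.2 ω := by
      intro x hx
      have hx2 := hNIAS x hx
      rw [hC] at hx2
      rw [hx2.1.2, mul_one]
    calc ∑ x ∈ π.support, π x = ∑ x ∈ π.support, π x * ∑ ω, x.2 ω :=
          Finset.sum_congr rfl h1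
      _ = ∑ x ∈ π.support, ∑ ω, π x * x.2 ω := by
          simp [Finset.mul_sum]
      _ = ∑ ω, ∑ x ∈ π.support, π x * x.2 ω := Finset.sum_comm
      _ = ∑ ω, p0 ω := by simp [hbayes]
      _ = 1 := hsum1
  have hw1 : w ≤ 1 := by
    rw [← hmass]
    exact Finset.single_le_sum (fun x _ => hpos x) hmem
  have hlam1 : lam < 1 := by
    rw [hlamdef, div_lt_one hε1]
    nlinarith
  have hlamne : (0:ℝ) < 1 - lam := by linarith
  -- the modified signal
  set μ : (A × (Ω → ℝ)) →₀ ℝ :=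
    π - Finsupp.single (astar, p) w + Finsupp.single (astar, p') c with hμdef
  set π'' : (A × (Ω → ℝ)) →₀ ℝ := (1 - lam)⁻¹ • μ with hπ''def
  have happly : ∀ x, π'' x =
      (1 - lam)⁻¹ * (π x - (Finsupp.single (astar, p) w) x
        + (Finsupp.single (astar, p') c) x) := by
    intro x
    rw [hπ''def, Finsupp.smul_apply, hμdef, Finsupp.add_apply, Finsupp.sub_apply,
      smul_eq_mul]
  have hδ1 : ∀ x, (Finsupp.single (astar, p) w) x ≤ π x := by
    intro x
    rcases eq_or_ne ((astar, p) : A × (Ω → ℝ)) x with h | h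
    · subst h; simp [← hwdef]
    · rw [Finsupp.single_eq_of_ne h.symm]; exact hpos x
  have hδ2 : ∀ x, 0 ≤ (Finsupp.single (astar, p') c) x := by
    intro x
    rw [Finsupp.single_apply]
    split_ifs <;> simp [hc.le]
  -- generic evaluation of weighted sums against π''
  have hT : ∀ f : A × (Ω → ℝ) → ℝ, ∑ x ∈ π''.support, π'' x * f x
      = (1 - lam)⁻¹ * (∑ x ∈ π.support, π x * f x - w * f (astar, p)
          + c * f (astar, p')) := by
    intro f
    rw [lc_eq, lc_eq]
    rw [hπ''def, hμdef]
    rw [map_smul, map_add, map_sub, Finsupp.linearCombination_single,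
      Finsupp.linearCombination_single]
    simp only [smul_eq_mul]
    try ring
  -- π'' is a valid signal
  have hpos'' : ∀ x, 0 ≤ π'' x := by
    intro x
    rw [happly x]
    apply mul_nonneg (le_of_lt (inv_pos.mpr hlamne))
    have := hδ1 x
    have := hδ2 x
    linarith
  -- support of π''
  have hsupp'' : ∀ x ∈ π''.support, x ∈ π.support ∨ x = (astar, p') := by
    intro x hx
    by_contra hcon
    push_neg at hcon
    obtain ⟨h1, h2⟩ := hcon
    have hπx : π x = 0 := by
      by_contra h; exact h1 (Finsupp.mem_support_iff.mpr h)
    have hd1 : (Finsupp.single (astar, p) w) x = 0 := by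
      rcases eq_or_ne ((astar, p) : A × (Ω → ℝ)) x with h | h
      · exfalso; rw [← h] at hπx; exact hw.ne' (hwdef.trans hπx)
      · rw [Finsupp.single_eq_of_ne h.symm]
    have hd2 : (Finsupp.single (astar, p') c) x = 0 := by
      rw [Finsupp.single_eq_of_ne h2]
    have : π'' x = 0 := by rw [happly x, hπx, hd1, hd2]; ring
    exact Finsupp.mem_support_iff.mp hx this
  have hNIAS'' : ∀ x ∈ π''.support, x.2 ∈ C x.1 := by
    intro x hx
    rcases hsupp'' x hx with h | h
    · exact hNIAS x h
    · subst h; exact hp'C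
  -- Bayes plausibility of π''
  have hbayes'' : ∀ ω, ∑ x ∈ π''.support, π'' x * x.2 ω = p0 ω := by
    intro ω
    rw [hT (fun x => x.2 ω)]
    simp only [hbayes ω]
    have : c * p' ω = w * p ω - lam * p0 ω := by
      rw [hp'def, hcdef, hlamdef]
      field_simp
      ring
    rw [this]
    field_simp
    ring
  -- apply optimality of π
  have hineq := hopt π'' ⟨hpos'', hbayes'', hNIAS''⟩
  rw [hT (fun x => ∑ ω, u x.1 ω * x.2 ω)] at hineq
  set V : ℝ := ∑ x ∈ π.support, π x * ∑ ω, u x.1 ω * x.2 ω with hVdef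
  set U0 : ℝ := ∑ ω, u astar ω * p0 ω with hU0def
  have hp'val : ∑ ω, u astar ω * p' ω
      = (1 + ε) * (∑ ω, u astar ω * p ω) - ε * U0 := by
    simp only [hp'def, hU0def, Finset.mul_sum, ← Finset.sum_sub_distrib]
    exact Finset.sum_congr rfl fun ω _ => by ring
  have hstrictU : U0 < V := hstrict astar hp0C
  simp only [hp'val] at hineq
  have hkey : c * ((1 + ε) * (∑ ω, u astar ω * p ω) - ε * U0)
      - w * (∑ ω, u astar ω * p ω) = - lam * U0 := by
    rw [hcdef, hlamdef]
    field_simp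
    ring
  have hineq2 : (1 - lam)⁻¹ * (V - lam * U0) ≤ V := by
    calc (1 - lam)⁻¹ * (V - lam * U0)
        = (1 - lam)⁻¹ * (V - w * (∑ ω, u astar ω * p ω)
            + c * ((1 + ε) * (∑ ω, u astar ω * p ω) - ε * U0)) := by
          have h5 : V - lam * U0 = V - w * (∑ ω, u astar ω * p ω)
              + c * ((1 + ε) * (∑ ω, u astar ω * p ω) - ε * U0) := by
            linarith [hkey]
          rw [h5]
      _ ≤ V := hineq
  have h3 : V - lam * U0 ≤ (1 - lam) * V := by
    have h4 := mul_le_mul_of_nonneg_left hineq2 hlamne.le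
    rw [← mul_assoc, mul_inv_cancel₀ hlamne.ne', one_mul] at h4
    linarith
  nlinarith [hstrictU, hlam]
end

section
/- Let F0 and F be CDFs on [0,1] with finite support, and define I(z) = ∫_0^z [F0(s) − F(s)] ds. If I(z) ≥ 0 for all z in the support Z of F0 and I(1) = 0, then I(z) ≥ 0 for all z ∈ [0,1]. -/
open Finset intervalIntegral

/-- Checking the mean-preserving-contraction integral condition at the finitely
many support points of the prior suffices: if `I(z) ≥ 0` on the support of `F0`
and `I(1) = 0`, then `I(z) ≥ 0` on all of `[0,1]`. -/
theorem stmt_13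
    (Z0 Z : Finset ℝ) (f0 f : ℝ → ℝ)
    (hZ0 : (↑Z0 : Set ℝ) ⊆ Set.Icc (0:ℝ) 1) (hZ : (↑Z : Set ℝ) ⊆ Set.Icc (0:ℝ) 1)
    (hf0 : ∀ s ∈ Z0, 0 < f0 s) (hf : ∀ s ∈ Z, 0 ≤ f s)
    (hs0 : ∑ s ∈ Z0, f0 s = 1) (hs : ∑ s ∈ Z, f s = 1)
    (F0 F : ℝ → ℝ)
    (hF0 : ∀ z, F0 z = ∑ s ∈ Z0.filter (· ≤ z), f0 s)
    (hF : ∀ z, F z = ∑ s ∈ Z.filter (· ≤ z), f s)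
    (I : ℝ → ℝ)
    (hI : ∀ z, I z = ∫ s in (0:ℝ)..z, (F0 s - F s))
    (hpos : ∀ z ∈ Z0, 0 ≤ I z)
    (h1 : I 1 = 0) :
    ∀ z ∈ Set.Icc (0:ℝ) 1, 0 ≤ I z := by
  -- monotonicity of the two CDFs
  have hMF0 : Monotone F0 := by
    intro u v huv
    rw [hF0, hF0]
    refine Finset.sum_le_sum_of_subset_of_nonneg ?_ ?_
    · intro t ht
      simp only [Finset.mem_filter] at ht ⊢
      exact ⟨ht.1, ht.2.trans huv⟩
    · intro t ht _
      exact (hf0 t (Finset.mem_filter.mp ht).1).le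
  have hMF : Monotone F := by
    intro u v huv
    rw [hF, hF]
    refine Finset.sum_le_sum_of_subset_of_nonneg ?_ ?_
    · intro t ht
      simp only [Finset.mem_filter] at ht ⊢
      exact ⟨ht.1, ht.2.trans huv⟩
    · intro t ht _
      exact hf t (Finset.mem_filter.mp ht).1
  have hint : ∀ u v : ℝ, IntervalIntegrable (fun s => F0 s - F s) MeasureTheory.volume u v := by
    intro u v
    exact (hMF0.intervalIntegrable).sub (hMF.intervalIntegrable)
  intro z hz
  obtain ⟨hz0, hz1⟩ := hz
  by_cases hzZ : z ∈ Z0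
  · exact hpos z hzZ
  -- left neighbouring point a
  obtain ⟨a, haz, haI, haMax⟩ :
      ∃ a : ℝ, a ≤ z ∧ 0 ≤ I a ∧ ∀ t ∈ Z0, t ≤ z → t ≤ a := by
    by_cases h : (Z0.filter (· ≤ z)).Nonempty
    · have hmem := (Z0.filter (· ≤ z)).max'_mem h
      rw [Finset.mem_filter] at hmem
      refine ⟨(Z0.filter (· ≤ z)).max' h, hmem.2, hpos _ hmem.1, ?_⟩
      intro t ht htz
      exact Finset.le_max' (Z0.filter (· ≤ z)) t (Finset.mem_filter.mpr ⟨ht, htz⟩)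
    · refine ⟨0, hz0, by rw [hI 0, intervalIntegral.integral_same], ?_⟩
      intro t ht htz
      exact absurd ⟨t, Finset.mem_filter.mpr ⟨ht, htz⟩⟩ h
  -- right neighbouring point b
  obtain ⟨b, hzb, hbI, hbMin⟩ :
      ∃ b : ℝ, z ≤ b ∧ 0 ≤ I b ∧ ∀ t ∈ Z0, z < t → b ≤ t := by
    by_cases h : (Z0.filter (fun t => z < t)).Nonempty
    · have hmem := (Z0.filter (fun t => z < t)).min'_mem h
      rw [Finset.mem_filter] at hmem
      refine ⟨(Z0.filter (fun t => z < t)).min' h, hmem.2.le, hpos _ hmem.1, ?_⟩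
      intro t ht htz
      exact Finset.min'_le _ t (Finset.mem_filter.mpr ⟨ht, htz⟩)
    · refine ⟨1, hz1, by rw [h1], ?_⟩
      intro t ht htz
      exact absurd ⟨t, Finset.mem_filter.mpr ⟨ht, htz⟩⟩ h
  -- F0 is constant on [a, b)
  have hconst : ∀ s, a ≤ s → (s ≤ z ∨ s < b) → F0 s = F0 a := by
    intro s has hs'
    rw [hF0, hF0]
    congr 1
    ext t
    simp only [Finset.mem_filter]
    constructor
    · rintro ⟨htZ0, hts⟩
      refine ⟨htZ0, ?_⟩
      have htz : t ≤ z := by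
        rcases hs' with h' | h'
        · exact hts.trans h'
        · by_contra hc
          push_neg at hc
          exact absurd ((hbMin t htZ0 hc).trans hts) (not_le.mpr h')
      exact haMax t htZ0 htz
    · rintro ⟨htZ0, hta⟩
      exact ⟨htZ0, hta.trans has⟩
  set c : ℝ := F0 a - F z with hc
  have hsplit1 : I z = I a + ∫ s in a..z, (F0 s - F s) := by
    rw [hI z, hI a, intervalIntegral.integral_add_adjacent_intervals (hint 0 a) (hint a z)]
  have hsplit2 : I b = I z + ∫ s in z..b, (F0 s - F s) := by
    rw [hI b, hI z, intervalIntegral.integral_add_adjacent_intervals (hint 0 z) (hint z b)]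
  -- lower bound on ∫_a^z
  have hlow : (z - a) * c ≤ ∫ s in a..z, (F0 s - F s) := by
    have h' : ∫ _ in a..z, c ≤ ∫ s in a..z, (F0 s - F s) := by
      apply intervalIntegral.integral_mono_on haz (intervalIntegrable_const) (hint a z)
      intro s hs
      have h1' : F0 s = F0 a := hconst s hs.1 (Or.inl hs.2)
      have h2' : F s ≤ F z := hMF hs.2
      rw [hc, h1']
      linarith
    rwa [intervalIntegral.integral_const, smul_eq_mul] at h'
  -- upper bound on ∫_z^b
  have hup : (∫ s in z..b, (F0 s - F s)) ≤ (b - z) * c := by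
    have h' : (∫ s in z..b, (F0 s - F s)) ≤ ∫ _ in z..b, c := by
      apply intervalIntegral.integral_mono_ae_restrict hzb (hint z b) (intervalIntegrable_const)
      refine (MeasureTheory.ae_restrict_iff' measurableSet_Icc).mpr ?_
      have hb0 : MeasureTheory.volume ({b} : Set ℝ) = 0 := MeasureTheory.measure_singleton b
      have hne : ∀ᵐ s : ℝ, s ≠ b := by
        rw [MeasureTheory.ae_iff]
        simpa using hb0
      filter_upwards [hne] with s hsb hs
      have hsltb : s < b := lt_of_le_of_ne hs.2 hsb
      have h1' : F0 s = F0 a := hconst s (haz.trans hs.1) (Or.inr hsltb)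
      have h2' : F z ≤ F s := hMF hs.1
      show F0 s - F s ≤ c
      rw [hc, h1']
      linarith
    rwa [intervalIntegral.integral_const, smul_eq_mul] at h'
  rcases le_or_gt 0 c with hcpos | hcneg
  · have h'' : (0:ℝ) ≤ (z - a) * c := mul_nonneg (by linarith) hcpos
    linarith
  · have h'' : (b - z) * c ≤ 0 := mul_nonpos_of_nonneg_of_nonpos (by linarith) hcneg.le
    linarith
end

section
/- (Discretization of posterior means) Let F0 be a finitely supported prior on [0,1] with support Z, and F ∈ I_{F0} a mean-preserving contraction of F0 which places mass m > 0 at a point z* ∉ (Z ∪ {z1, z2}) with z1 < z* < z2 and no point of Z ∪ {z1,z2} strictly between z1 and z2, where z1, z2 are given. Let α = (z*−z1)/(z2−z1) and let F̂ be obtained from F by moving the mass m at z* to mass (1−α)m at z1 and αm at z2. Then F̂ is still a mean-preserving contraction of F0, and F̂ has the same mean as F. -/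
open Finset intervalIntegral

section Helpers
open MeasureTheory
open Finset intervalIntegral MeasureTheory

lemma step_ii (s c a b : ℝ) :
    IntervalIntegrable (fun t => if s ≤ t then c else 0) volume a b := by
  have h : (fun t => if s ≤ t then c else 0) = (Set.Ici s).indicator (fun _ => c) := by
    funext t; by_cases h : s ≤ t <;> simp [Set.indicator, h]
  rw [h, intervalIntegrable_iff]
  exact (integrableOn_const measure_Ioc_lt_top.ne).indicator measurableSet_Ici

lemma sum_step_ii (S : Finset ℝ) (c : ℝ → ℝ) (a b : ℝ) :
    IntervalIntegrable (fun t => ∑ s ∈ S.filter (· ≤ t), c s) volume a b := by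
  have h : (fun t => ∑ s ∈ S.filter (· ≤ t), c s)
      = fun t => ∑ s ∈ S, if s ≤ t then c s else 0 := by
    funext t; exact Finset.sum_filter _ _
  rw [h]
  have h2 := IntervalIntegrable.sum (f := fun s t => if s ≤ t then c s else 0) S
    (fun s _ => step_ii s (c s) a b)
  have h3 : (∑ s ∈ S, fun t => if s ≤ t then c s else 0)
      = fun t => ∑ s ∈ S, if s ≤ t then c s else 0 := by
    funext t; simp
  rwa [h3] at h2

lemma step_integral (s c z : ℝ) (hs : 0 ≤ s) (hz : 0 ≤ z) :
    (∫ t in (0:ℝ)..z, (if s ≤ t then c else 0)) = c * max (z - s) 0 := by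
  have hne : ∀ᵐ t : ℝ, t ≠ s := by
    refine MeasureTheory.ae_iff.mpr ?_
    simp [Set.setOf_eq_eq_singleton']
  have h0 : (∫ t in (0:ℝ)..z, (if s ≤ t then c else 0))
      = ∫ t in (0:ℝ)..z, (Set.Ioi s).indicator (fun _ => c) t := by
    refine intervalIntegral.integral_congr_ae ?_
    filter_upwards [hne] with t ht _
    by_cases h : s < t
    · simp [Set.indicator, h, le_of_lt h]
    · have : ¬ s ≤ t := fun hle => h (lt_of_le_of_ne hle (Ne.symm ht))
      simp [Set.indicator, h, this]
  rw [h0, intervalIntegral.integral_of_le hz, setIntegral_indicator measurableSet_Ioi,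
    Set.Ioc_inter_Ioi, setIntegral_const, Real.volume_real_Ioc, smul_eq_mul,
    max_eq_right hs]
  ring

lemma sum_step_integral (S : Finset ℝ) (hS : ∀ s ∈ S, (0:ℝ) ≤ s) (c : ℝ → ℝ)
    (z : ℝ) (hz : 0 ≤ z) :
    (∫ t in (0:ℝ)..z, (∑ s ∈ S.filter (· ≤ t), c s))
      = ∑ s ∈ S, c s * max (z - s) 0 := by
  have h : ∀ t, ∑ s ∈ S.filter (· ≤ t), c s = ∑ s ∈ S, if s ≤ t then c s else 0 :=
    fun t => Finset.sum_filter _ _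
  simp_rw [h]
  rw [intervalIntegral.integral_finset_sum (fun s _ => step_ii s (c s) 0 z)]
  exact Finset.sum_congr rfl fun s hsS => step_integral s (c s) z (hS s hsS) hz
open Finset

lemma starSum14 (W : Finset ℝ) (f : ℝ → ℝ) (z1 z2 zstar m α : ℝ)
    (hzW : zstar ∈ W) (hmass : f zstar = m)
    (h1 : z1 ≠ zstar) (h2 : z2 ≠ zstar) (h12 : z1 ≠ z2)
    (hfW : ∀ s, s ∉ W → f s = 0)
    (fhat : ℝ → ℝ)
    (hfhat : ∀ s, fhat s = if s = zstar then 0 else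
        if s = z1 then f z1 + (1 - α) * m else
        if s = z2 then f z2 + α * m else f s)
    (What : Finset ℝ) (hWhat : What = W ∪ {z1, z2}) (φ : ℝ → ℝ) :
    ∑ s ∈ What, fhat s * φ s
      = (∑ s ∈ W, f s * φ s) + (1 - α) * m * φ z1 + α * m * φ z2 - m * φ zstar := by
  have hsub : W ⊆ What := by rw [hWhat]; exact Finset.subset_union_left
  have h3 : ({z1, z2, zstar} : Finset ℝ) ⊆ What := by
    rw [hWhat]; intro x hx
    simp only [Finset.mem_insert, Finset.mem_singleton] at hx
    simp only [Finset.mem_union, Finset.mem_insert, Finset.mem_singleton]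
    rcases hx with h | h | h
    · exact Or.inr (Or.inl h)
    · exact Or.inr (Or.inr h)
    · exact Or.inl (h ▸ hzW)
  have e1 : ∑ s ∈ What, f s * φ s = ∑ s ∈ W, f s * φ s :=
    (Finset.sum_subset hsub (fun x _ hxW => by rw [hfW x hxW, zero_mul])).symm
  have e2 : ∑ s ∈ What, (fhat s * φ s - f s * φ s)
      = ∑ s ∈ ({z1, z2, zstar} : Finset ℝ), (fhat s * φ s - f s * φ s) := by
    refine (Finset.sum_subset h3 fun x _ hx3 => ?_).symm
    simp only [Finset.mem_insert, Finset.mem_singleton, not_or] at hx3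
    rw [hfhat, if_neg hx3.2.2, if_neg hx3.1, if_neg hx3.2.1, sub_self]
  have e3 : ∑ s ∈ ({z1, z2, zstar} : Finset ℝ), (fhat s * φ s - f s * φ s)
      = (1 - α) * m * φ z1 + α * m * φ z2 - m * φ zstar := by
    rw [Finset.sum_insert (by simp [h12, h1]), Finset.sum_insert (by simp [h2]),
      Finset.sum_singleton]
    rw [hfhat z1, hfhat z2, hfhat zstar, if_neg h1, if_pos rfl, if_neg h2,
      if_neg (Ne.symm h12), if_pos rfl, if_pos rfl, hmass]
    ring
  have := Finset.sum_sub_distrib (s := What) (f := fun s => fhat s * φ s)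
    (g := fun s => f s * φ s)
  calc ∑ s ∈ What, fhat s * φ s
      = (∑ s ∈ What, (fhat s * φ s - f s * φ s)) + ∑ s ∈ What, f s * φ s := by
        rw [this]; ring
    _ = _ := by rw [e1, e2, e3]; ring

lemma max_convex (z1 z2 z s t : ℝ) (ht : 0 ≤ t) (ht1 : t ≤ 1)
    (hz : z = (1 - t) * z1 + t * z2) :
    max (z - s) 0 ≤ (1 - t) * max (z1 - s) 0 + t * max (z2 - s) 0 := by
  have hr : 0 ≤ (1 - t) * max (z1 - s) 0 + t * max (z2 - s) 0 :=
    add_nonneg (mul_nonneg (by linarith) (le_max_right _ _))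
      (mul_nonneg ht (le_max_right _ _))
  refine max_le ?_ hr
  have e : z - s = (1 - t) * (z1 - s) + t * (z2 - s) := by rw [hz]; ring
  rw [e]
  have a1 := mul_le_mul_of_nonneg_left (le_max_left (z1 - s) 0) (by linarith : (0:ℝ) ≤ 1 - t)
  have a2 := mul_le_mul_of_nonneg_left (le_max_left (z2 - s) 0) ht
  linarith

lemma max_affine (z1 z2 z s t : ℝ) (hz1z : z1 ≤ z) (hzz2 : z ≤ z2)
    (hz : z = (1 - t) * z1 + t * z2) (hs : s ≤ z1 ∨ z2 ≤ s) :
    max (z - s) 0 = (1 - t) * max (z1 - s) 0 + t * max (z2 - s) 0 := by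
  rcases hs with h | h
  · rw [max_eq_left (by linarith), max_eq_left (by linarith), max_eq_left (by linarith)]
    rw [hz]; ring
  · rw [max_eq_right (by linarith), max_eq_right (by linarith), max_eq_right (by linarith)]
    ring

end Helpers

/-- Discretization of posterior means: moving the mass `m` that `F` places at
`z* ∉ Z` to the bracketing points `z1 < z* < z2` (with no point of `Z` strictly
between them), in the mean-preserving proportions `1−α, α`, yields a
distribution that is still a mean-preserving contraction of the prior `F0` and
has the same mean as `F`. -/
theorem stmt_14
    (Z W : Finset ℝ) (f0 f : ℝ → ℝ)
    (hZ : (↑Z : Set ℝ) ⊆ Set.Icc (0:ℝ) 1) (hW : (↑W : Set ℝ) ⊆ Set.Icc (0:ℝ) 1)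
    (hf0 : ∀ s ∈ Z, 0 ≤ f0 s) (hf : ∀ s ∈ W, 0 ≤ f s)
    (hs0 : ∑ s ∈ Z, f0 s = 1) (hs : ∑ s ∈ W, f s = 1)
    (hfW : ∀ s, s ∉ W → f s = 0)
    (z1 z2 zstar m : ℝ)
    (hz1 : z1 ∈ Set.Icc (0:ℝ) 1) (hz2 : z2 ∈ Set.Icc (0:ℝ) 1)
    (hlt1 : z1 < zstar) (hlt2 : zstar < z2)
    (hzstarW : zstar ∈ W) (hmass : f zstar = m) (hm : 0 < m)
    (hnotZ : zstar ∉ Z) (hgap : ∀ z ∈ Z, z ∉ Set.Ioo z1 z2)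
    (F0 F : ℝ → ℝ)
    (hF0 : ∀ z, F0 z = ∑ s ∈ Z.filter (· ≤ z), f0 s)
    (hF : ∀ z, F z = ∑ s ∈ W.filter (· ≤ z), f s)
    (hMPC : ∀ z ∈ Set.Icc (0:ℝ) 1, 0 ≤ ∫ s in (0:ℝ)..z, (F0 s - F s))
    (hMPC1 : (∫ s in (0:ℝ)..1, (F0 s - F s)) = 0)
    (α : ℝ) (hα : α = (zstar - z1) / (z2 - z1))
    (fhat : ℝ → ℝ)
    (hfhat : ∀ s, fhat s = if s = zstar then 0 else
        if s = z1 then f z1 + (1 - α) * m else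
        if s = z2 then f z2 + α * m else f s)
    (What : Finset ℝ) (hWhat : What = W ∪ {z1, z2})
    (Fhat : ℝ → ℝ)
    (hFhat : ∀ z, Fhat z = ∑ s ∈ What.filter (· ≤ z), fhat s) :
    (∀ z ∈ Set.Icc (0:ℝ) 1, 0 ≤ ∫ s in (0:ℝ)..z, (F0 s - Fhat s)) ∧
    ((∫ s in (0:ℝ)..1, (F0 s - Fhat s)) = 0) ∧
    (∑ s ∈ What, s * fhat s = ∑ s ∈ W, s * f s) := by
  -- basic facts
  have hz12 : z1 < z2 := hlt1.trans hlt2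
  have hd : (0:ℝ) < z2 - z1 := by linarith
  have hne1 : z1 ≠ zstar := ne_of_lt hlt1
  have hne2 : z2 ≠ zstar := (ne_of_lt hlt2).symm
  have h12 : z1 ≠ z2 := ne_of_lt hz12
  have hαz : α * (z2 - z1) = zstar - z1 := by
    rw [hα]; field_simp
  have hα0 : 0 ≤ α := by
    rw [hα]; exact div_nonneg (by linarith) (by linarith)
  have hα1 : α ≤ 1 := by
    rw [hα]; rw [div_le_one hd]; linarith
  have hZpos : ∀ s ∈ Z, (0:ℝ) ≤ s := fun s hs => (hZ hs).1
  have hWpos : ∀ s ∈ W, (0:ℝ) ≤ s := fun s hs => (hW hs).1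
  have hWhatpos : ∀ s ∈ What, (0:ℝ) ≤ s := by
    intro s hs
    rw [hWhat] at hs
    rcases Finset.mem_union.1 hs with h | h
    · exact hWpos s h
    · simp only [Finset.mem_insert, Finset.mem_singleton] at h
      rcases h with h | h
      · exact h ▸ hz1.1
      · exact h ▸ hz2.1
  have hfz1 : 0 ≤ f z1 := by
    by_cases h : z1 ∈ W
    · exact hf z1 h
    · rw [hfW z1 h]
  have hfz2 : 0 ≤ f z2 := by
    by_cases h : z2 ∈ W
    · exact hf z2 h
    · rw [hfW z2 h]
  have hfhat_nonneg : ∀ s ∈ What, 0 ≤ fhat s := by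
    intro s hsW
    rw [hfhat]
    split_ifs with h1 h2 h3
    · exact le_refl 0
    · nlinarith
    · nlinarith
    · rw [hWhat] at hsW
      rcases Finset.mem_union.1 hsW with h | h
      · exact hf s h
      · simp only [Finset.mem_insert, Finset.mem_singleton] at h
        rcases h with h | h
        · exact absurd h h2
        · exact absurd h h3
  -- integral formulas
  have hInt0 : ∀ z ∈ Set.Icc (0:ℝ) 1, (∫ s in (0:ℝ)..z, (F0 s - F s))
      = (∑ s ∈ Z, f0 s * max (z - s) 0) - ∑ s ∈ W, f s * max (z - s) 0 := by
    intro z hz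
    simp only [hF0, hF]
    rw [intervalIntegral.integral_sub (sum_step_ii Z f0 0 z) (sum_step_ii W f 0 z),
      sum_step_integral Z hZpos f0 z hz.1, sum_step_integral W hWpos f z hz.1]
  have hIntH : ∀ z ∈ Set.Icc (0:ℝ) 1, (∫ s in (0:ℝ)..z, (F0 s - Fhat s))
      = (∑ s ∈ Z, f0 s * max (z - s) 0) - ∑ s ∈ What, fhat s * max (z - s) 0 := by
    intro z hz
    simp only [hF0, hFhat]
    rw [intervalIntegral.integral_sub (sum_step_ii Z f0 0 z) (sum_step_ii What fhat 0 z),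
      sum_step_integral Z hZpos f0 z hz.1, sum_step_integral What hWhatpos fhat z hz.1]
  have hstar : ∀ z : ℝ, ∑ s ∈ What, fhat s * max (z - s) 0
      = (∑ s ∈ W, f s * max (z - s) 0)
        + (1 - α) * m * max (z - z1) 0 + α * m * max (z - z2) 0 - m * max (z - zstar) 0 :=
    fun z => starSum14 W f z1 z2 zstar m α hzstarW hmass hne1 hne2 h12 hfW fhat hfhat
      What hWhat (fun s => max (z - s) 0)
  -- the correction term vanishes outside (z1, z2)
  have key0 : ∀ z : ℝ, z ≤ z1 ∨ z2 ≤ z →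
      (1 - α) * m * max (z - z1) 0 + α * m * max (z - z2) 0 - m * max (z - zstar) 0 = 0 := by
    intro z h
    rcases h with h | h
    · rw [max_eq_right (by linarith), max_eq_right (by linarith), max_eq_right (by linarith)]
      ring
    · rw [max_eq_left (by linarith), max_eq_left (by linarith), max_eq_left (by linarith)]
      linear_combination (-m) * hαz
  -- base nonnegativity at points outside (z1, z2)
  have base : ∀ w, w ∈ Set.Icc (0:ℝ) 1 → w ≤ z1 ∨ z2 ≤ w →
      0 ≤ (∑ s ∈ Z, f0 s * max (w - s) 0) - ∑ s ∈ What, fhat s * max (w - s) 0 := by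
    intro w hw hcase
    have h1 := hInt0 w hw
    have h2 := hstar w
    have h3 := key0 w hcase
    have h4 := hMPC w hw
    linarith
  refine ⟨?_, ?_, ?_⟩
  · -- first goal
    intro z hzI
    rw [hIntH z hzI]
    rcases le_or_gt z z1 with hc | hc
    · exact base z hzI (Or.inl hc)
    rcases le_or_gt z2 z with hc2 | hc2
    · exact base z hzI (Or.inr hc2)
    · -- middle case z1 < z < z2
      set t : ℝ := (z - z1) / (z2 - z1) with htdef
      have ht0 : 0 ≤ t := div_nonneg (by linarith) (by linarith)
      have ht1 : t ≤ 1 := by rw [htdef, div_le_one hd]; linarith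
      have hzc : z = (1 - t) * z1 + t * z2 := by
        rw [htdef]; field_simp; ring
      have hI0aff : ∑ s ∈ Z, f0 s * max (z - s) 0
          = (1 - t) * (∑ s ∈ Z, f0 s * max (z1 - s) 0)
            + t * (∑ s ∈ Z, f0 s * max (z2 - s) 0) := by
        rw [Finset.mul_sum, Finset.mul_sum, ← Finset.sum_add_distrib]
        refine Finset.sum_congr rfl fun s hsZ => ?_
        have hsc : s ≤ z1 ∨ z2 ≤ s := by
          have := hgap s hsZ
          simp only [Set.mem_Ioo, not_and_or, not_lt] at this
          exact this
        rw [max_affine z1 z2 z s t (le_of_lt hc) (le_of_lt hc2) hzc hsc]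
        ring
      have hIhconv : ∑ s ∈ What, fhat s * max (z - s) 0
          ≤ (1 - t) * (∑ s ∈ What, fhat s * max (z1 - s) 0)
            + t * (∑ s ∈ What, fhat s * max (z2 - s) 0) := by
        rw [Finset.mul_sum, Finset.mul_sum, ← Finset.sum_add_distrib]
        refine Finset.sum_le_sum fun s hsW => ?_
        have hcv := max_convex z1 z2 z s t ht0 ht1 hzc
        have hnn := hfhat_nonneg s hsW
        nlinarith
      have b1 := base z1 hz1 (Or.inl (le_refl z1))
      have b2 := base z2 hz2 (Or.inr (le_refl z2))
      have m1 : 0 ≤ (1 - t) * ((∑ s ∈ Z, f0 s * max (z1 - s) 0)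
          - ∑ s ∈ What, fhat s * max (z1 - s) 0) := mul_nonneg (by linarith) b1
      have m2 : 0 ≤ t * ((∑ s ∈ Z, f0 s * max (z2 - s) 0)
          - ∑ s ∈ What, fhat s * max (z2 - s) 0) := mul_nonneg ht0 b2
      nlinarith
  · -- second goal
    have h01 : (1:ℝ) ∈ Set.Icc (0:ℝ) 1 := by norm_num
    rw [hIntH 1 h01]
    have h1 := hInt0 1 h01
    have h2 := hstar 1
    have h3 := key0 1 (Or.inr hz2.2)
    linarith
  · -- third goal
    have hst := starSum14 W f z1 z2 zstar m α hzstarW hmass hne1 hne2 h12 hfW fhat hfhat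
      What hWhat (fun s => s)
    have e1 : ∑ s ∈ What, s * fhat s = ∑ s ∈ What, fhat s * s :=
      Finset.sum_congr rfl fun s _ => mul_comm _ _
    have e2 : ∑ s ∈ W, s * f s = ∑ s ∈ W, f s * s :=
      Finset.sum_congr rfl fun s _ => mul_comm _ _
    rw [e1, e2, hst]
    linear_combination m * hαz
end

section
/- (Necessity of NBPS, core perturbation argument) Let menus A_1,…,A_n have optimal obedient Bayes-plausible signals π_1,…,π_n (for a common sender utility u), each with supporting hyperplanes λ_1,…,λ_n in the sense that λ_i·p = Σ_ω u(a,ω)p(ω) for (a,p) ∈ supp(π_i) and λ_i·p ≥ Σ_ω u(a*(p),ω)p(ω) for all p. Suppose alternative obedient signals π̃_1,…,π̃_n and weights β_1,…,β_n ≥ 0 satisfy: (i) each π̃_i is Bayes-plausible for the common prior p0, and (ii) Σ_i β_i Σ_p p·π_i(a,p) = Σ_i β_i Σ_p p·π̃_i(a,p) for every action a. Then Σ_i β_i [sender value of π̃_i] = Σ_i β_i [sender value of π_i], and hence if for some menu j the signal π̃_j places positive probability on a pair (a, p0) with λ_j·p0 > Σ_ω u(a,ω)p0(ω), there exists a menu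 k and a pair (a',p') in the support of π̃_k with Σ_ω u(a',ω)p'(ω) > λ_k·p', contradicting optimality of π_k. -/
open Finset

lemma my_value_fiber {Ω X : Type} [Fintype Ω] [Fintype X] [DecidableEq X]
    (σ : (X × (Ω → ℝ)) →₀ ℝ) (u : X → Ω → ℝ) :
    ∑ x ∈ σ.support, σ x * ∑ ω, u x.1 ω * x.2 ω
      = ∑ a, ∑ ω, u a ω * ∑ x ∈ σ.support.filter (fun x => x.1 = a), σ x * x.2 ω := by
  rw [← Finset.sum_fiberwise σ.support (fun x => x.1)
      (fun x => σ x * ∑ ω, u x.1 ω * x.2 ω)]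
  refine Finset.sum_congr rfl fun a _ => ?_
  calc ∑ x ∈ σ.support.filter (fun x => x.1 = a), σ x * ∑ ω, u x.1 ω * x.2 ω
      = ∑ x ∈ σ.support.filter (fun x => x.1 = a), ∑ ω, u a ω * (σ x * x.2 ω) := by
        refine Finset.sum_congr rfl fun x hx => ?_
        have h1 : x.1 = a := (Finset.mem_filter.mp hx).2
        rw [h1, Finset.mul_sum]
        exact Finset.sum_congr rfl fun ω _ => by ring
    _ = ∑ ω, ∑ x ∈ σ.support.filter (fun x => x.1 = a), u a ω * (σ x * x.2 ω) :=
        Finset.sum_comm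
    _ = ∑ ω, u a ω * ∑ x ∈ σ.support.filter (fun x => x.1 = a), σ x * x.2 ω := by
        refine Finset.sum_congr rfl fun ω _ => ?_
        rw [Finset.mul_sum]

lemma my_bayes_val {Ω X : Type} [Fintype Ω] (p0 : Ω → ℝ)
    (σ : (X × (Ω → ℝ)) →₀ ℝ) (l : Ω → ℝ)
    (h : ∀ ω, ∑ x ∈ σ.support, σ x * x.2 ω = p0 ω) :
    ∑ x ∈ σ.support, σ x * ∑ ω, l ω * x.2 ω = ∑ ω, l ω * p0 ω := by
  calc ∑ x ∈ σ.support, σ x * ∑ ω, l ω * x.2 ω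
      = ∑ x ∈ σ.support, ∑ ω, l ω * (σ x * x.2 ω) := by
        refine Finset.sum_congr rfl fun x _ => ?_
        rw [Finset.mul_sum]; exact Finset.sum_congr rfl fun ω _ => by ring
    _ = ∑ ω, ∑ x ∈ σ.support, l ω * (σ x * x.2 ω) := Finset.sum_comm
    _ = ∑ ω, l ω * p0 ω := by
        refine Finset.sum_congr rfl fun ω _ => ?_
        rw [← Finset.mul_sum, h ω]

lemma my_swap {Ω X : Type} [Fintype Ω] [Fintype X] {n : ℕ} (β : Fin n → ℝ)
    (u : X → Ω → ℝ) (H : Fin n → X → Ω → ℝ) :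
    ∑ i, β i * ∑ a, ∑ ω, u a ω * H i a ω
      = ∑ a, ∑ ω, u a ω * ∑ i, β i * H i a ω := by
  simp_rw [Finset.mul_sum]
  rw [Finset.sum_comm]
  refine Finset.sum_congr rfl fun a _ => ?_
  rw [Finset.sum_comm]
  refine Finset.sum_congr rfl fun ω _ => Finset.sum_congr rfl fun i _ => by ring

/-- Necessity of NBPS, core perturbation argument: balanced Bayes-plausible
obedient alternatives preserve the weighted sender value; hence a strict loss
at the prior in some menu must be offset by a strict gain above some menu's
supporting hyperplane, contradicting optimality. -/
theorem stmt_17 {Ω X : Type} [Fintype Ω] [Fintype X] [DecidableEq X] {n : ℕ}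
    (p0 : Ω → ℝ) (hp0 : p0 ∈ stdSimplex ℝ Ω)
    (u v : X → Ω → ℝ)
    (A : Fin n → Finset X)
    (π πt : Fin n → ((X × (Ω → ℝ)) →₀ ℝ))
    (β : Fin n → ℝ) (hβ : ∀ i, 0 ≤ β i)
    (lam : Fin n → Ω → ℝ)
    -- the original signals: nonnegative, Bayes-plausible, obedient
    (hπpos : ∀ i x, 0 ≤ π i x)
    (hπbayes : ∀ i ω, ∑ x ∈ (π i).support, π i x * x.2 ω = p0 ω)
    (hπobed : ∀ i, ∀ x ∈ (π i).support, x.1 ∈ A i ∧ x.2 ∈ stdSimplex ℝ Ω ∧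
      ∀ b ∈ A i, ∑ ω, v b ω * x.2 ω ≤ ∑ ω, v x.1 ω * x.2 ω)
    -- supporting hyperplanes for the optimal signals
    (hlam1 : ∀ i, ∀ x ∈ (π i).support,
      ∑ ω, lam i ω * x.2 ω = ∑ ω, u x.1 ω * x.2 ω)
    (hlam2 : ∀ i, ∀ p ∈ stdSimplex ℝ Ω, ∀ a ∈ A i,
      (∀ b ∈ A i, ∑ ω, v b ω * p ω ≤ ∑ ω, v a ω * p ω) →
        ∑ ω, u a ω * p ω ≤ ∑ ω, lam i ω * p ω)
    -- the alternative signals: nonnegative, Bayes-plausible, obedient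
    (hπtpos : ∀ i x, 0 ≤ πt i x)
    (hπtbayes : ∀ i ω, ∑ x ∈ (πt i).support, πt i x * x.2 ω = p0 ω)
    (hπtobed : ∀ i, ∀ x ∈ (πt i).support, x.1 ∈ A i ∧ x.2 ∈ stdSimplex ℝ Ω ∧
      ∀ b ∈ A i, ∑ ω, v b ω * x.2 ω ≤ ∑ ω, v x.1 ω * x.2 ω)
    -- (ii) the weighted state-dependent action probabilities balance
    (hbal : ∀ (a : X) (ω : Ω),
      ∑ i, β i * ∑ x ∈ (π i).support.filter (fun x => x.1 = a), π i x * x.2 ω =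
      ∑ i, β i * ∑ x ∈ (πt i).support.filter (fun x => x.1 = a), πt i x * x.2 ω) :
    (∑ i, β i * ∑ x ∈ (πt i).support, πt i x * ∑ ω, u x.1 ω * x.2 ω =
      ∑ i, β i * ∑ x ∈ (π i).support, π i x * ∑ ω, u x.1 ω * x.2 ω) ∧
    ((∃ (j : Fin n) (a : X), 0 < β j ∧ 0 < πt j (a, p0) ∧
        ∑ ω, u a ω * p0 ω < ∑ ω, lam j ω * p0 ω) →
      ∃ k : Fin n, ∃ x ∈ (πt k).support,
        ∑ ω, lam k ω * x.2 ω < ∑ ω, u x.1 ω * x.2 ω) := by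

  -- Part 1
  have part1 : ∑ i, β i * ∑ x ∈ (πt i).support, πt i x * ∑ ω, u x.1 ω * x.2 ω =
      ∑ i, β i * ∑ x ∈ (π i).support, π i x * ∑ ω, u x.1 ω * x.2 ω := by
    simp_rw [my_value_fiber]
    rw [my_swap, my_swap]
    refine Finset.sum_congr rfl fun a _ => Finset.sum_congr rfl fun ω _ => ?_
    rw [← hbal a ω]
  refine ⟨part1, ?_⟩
  rintro ⟨j, a, hβj, hπtj, hstrict⟩
  by_contra hno
  push_neg at hno
  -- every signal's value is bounded by the hyperplane value, strictly for j
  have hub : ∀ i, ∑ x ∈ (πt i).support, πt i x * ∑ ω, u x.1 ω * x.2 ω ≤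
      ∑ ω, lam i ω * p0 ω := by
    intro i
    rw [← my_bayes_val p0 (πt i) (lam i) (hπtbayes i)]
    refine Finset.sum_le_sum fun x hx => ?_
    exact mul_le_mul_of_nonneg_left (hno i x hx) (hπtpos i x)
  have hubj : ∑ x ∈ (πt j).support, πt j x * ∑ ω, u x.1 ω * x.2 ω <
      ∑ ω, lam j ω * p0 ω := by
    rw [← my_bayes_val p0 (πt j) (lam j) (hπtbayes j)]
    have hmem : ((a, p0) : X × (Ω → ℝ)) ∈ (πt j).support :=
      Finsupp.mem_support_iff.mpr (ne_of_gt hπtj)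
    refine Finset.sum_lt_sum
      (fun x hx => mul_le_mul_of_nonneg_left (hno j x hx) (hπtpos j x))
      ⟨(a, p0), hmem, ?_⟩
    exact mul_lt_mul_of_pos_left hstrict hπtj
  -- the original signals hit the hyperplane value exactly
  have heq : ∀ i, ∑ x ∈ (π i).support, π i x * ∑ ω, u x.1 ω * x.2 ω =
      ∑ ω, lam i ω * p0 ω := by
    intro i
    rw [← my_bayes_val p0 (π i) (lam i) (hπbayes i)]
    exact Finset.sum_congr rfl fun x hx => by rw [hlam1 i x hx]
  have hlt : ∑ i, β i * ∑ x ∈ (πt i).support, πt i x * ∑ ω, u x.1 ω * x.2 ω <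
      ∑ i, β i * ∑ ω, lam i ω * p0 ω := by
    refine Finset.sum_lt_sum
      (fun i _ => mul_le_mul_of_nonneg_left (hub i) (hβ i))
      ⟨j, Finset.mem_univ j, mul_lt_mul_of_pos_left hubj hβj⟩
  have heq2 : ∑ i, β i * ∑ x ∈ (π i).support, π i x * ∑ ω, u x.1 ω * x.2 ω =
      ∑ i, β i * ∑ ω, lam i ω * p0 ω :=
    Finset.sum_congr rfl fun i _ => by rw [heq i]
  rw [part1, heq2] at hlt
  exact lt_irrefl _ hlt
end
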